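/- arXiv:1404.3455 — 4 statements merged into one kernel-verified Lean document; each statement's English description precedes it below -/
import Mathlib

section
/- For any finite poset P, piecewise-linear rowmotion factors through Stanley's transfer map: ρ_P = α1∘α3∘α2 as maps on the order polytope O(P), where α2 : O(P) → C(P) is the transfer map (α2 f)(x) = min{ f(x)−f(y) : y ∈ P̂, y is covered by x }, α3 is defined by the downward recursion (α3 g)(x) = g(x) + max{ (α3 g)(y) : y ∈ P̂, y covers x } with (α3 g)(1̂) = 0, and (α1 h)(x) = 1 − h(x). -/
open scoped Classical

noncomputable section

instance {α : Type*} [Fintype α] : Fintype (WithTop α) := inferInstanceAs (Fintype (Option α))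
instance {α : Type*} [Fintype α] : Fintype (WithBot α) := inferInstanceAs (Fintype (Option α))

variable {P : Type*} [Fintype P] [PartialOrder P]

/-- The embedding of `P` into `P̂ = WithBot (WithTop P)`, the poset obtained from `P` by
adjoining a new minimum `⊥` and a new maximum `⊤`. -/
def emb (x : P) : WithBot (WithTop P) := ((x : WithTop P) : WithBot (WithTop P))

/-- Extend `f : P → ℝ` to `P̂` with value `v0` at the new minimum and `v1` at the new maximum. -/
def extendHat (v0 v1 : ℝ) (f : P → ℝ) : WithBot (WithTop P) → ℝ :=
  WithBot.recBotCoe v0 (WithTop.recTopCoe v1 f)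

/-- `L`: the maximum of the (extended, with `f(0̂) = 0`) values at elements of `P̂` covered by `x`. -/
def plL (f : P → ℝ) (x : P) : ℝ := sSup (extendHat 0 1 f '' {y | y ⋖ emb x})

/-- `R`: the minimum of the (extended, with `f(1̂) = 1`) values at elements of `P̂` covering `x`. -/
def plR (f : P → ℝ) (x : P) : ℝ := sInf (extendHat 0 1 f '' {y | emb x ⋖ y})

/-- The piecewise-linear toggle at `x`. -/
def plToggle (x : P) (f : P → ℝ) : P → ℝ :=
  Function.update f x (plL f x + plR f x - f x)

/-- `xs` is a linear extension of `P`: an enumeration of all elements such that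
`x_i < x_j` in `P` implies `i < j`. -/
def IsLinearExt (xs : List P) : Prop :=
  xs.Nodup ∧ (∀ x : P, x ∈ xs) ∧ xs.Pairwise fun u v => ¬ v < u

/-- Piecewise-linear rowmotion along the linear extension `xs = [x₁, …, x_p]`:
the composite `τ_{x₁} ∘ ⋯ ∘ τ_{x_p}` (toggling from top to bottom). -/
def plRow (xs : List P) (f : P → ℝ) : P → ℝ := xs.foldr plToggle f

/-- Membership in the order polytope `O(P)`. -/
def InOrderPolytope (f : P → ℝ) : Prop :=
  Monotone f ∧ ∀ x, 0 ≤ f x ∧ f x ≤ 1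

/-- `L`: the sum of the (extended, with `f(0̂) = 1`) values at elements of `P̂` covered by `x`. -/
def bL (f : P → ℝ) (x : P) : ℝ :=
  ∑ y : WithBot (WithTop P), if y ⋖ emb x then extendHat 1 1 f y else 0

/-- `R`: the parallel sum of the (extended, with `f(1̂) = 1`) values at elements of `P̂`
covering `x`. -/
def bR (f : P → ℝ) (x : P) : ℝ :=
  (∑ y : WithBot (WithTop P), if emb x ⋖ y then (extendHat 1 1 f y)⁻¹ else 0)⁻¹

/-- The birational toggle at `x`. -/
def bToggle (x : P) (f : P → ℝ) : P → ℝ :=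
  Function.update f x (bL f x * bR f x / f x)

/-- Birational rowmotion along the linear extension `xs = [x₁, …, x_p]`:
the composite `τ_{x₁} ∘ ⋯ ∘ τ_{x_p}` (toggling from top to bottom). -/
def bRow (xs : List P) (f : P → ℝ) : P → ℝ := xs.foldr bToggle f

/-- The `k`-th file of `[a] × [b]` (in `Fin a × Fin b` coordinates, where `(i,j) : Fin a × Fin b`
corresponds to `(i+1, j+1) ∈ [a] × [b]`): the condition `j - i = k - a` (1-based). -/
def InFile (a b k : ℕ) (x : Fin a × Fin b) : Prop :=
  ((x.2 : ℤ) - (x.1 : ℤ) = (k : ℤ) - (a : ℤ))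

/-- The piecewise-linear file-toggle `τ_k^*`: simultaneously toggle all elements of the `k`-th
file (these toggles commute, and none reads another's value, so this is their composition). -/
def plFileToggle (a b : ℕ) (k : ℕ) (f : Fin a × Fin b → ℝ) : Fin a × Fin b → ℝ :=
  fun x => if InFile a b k x then plL f x + plR f x - f x else f x

/-- Piecewise-linear promotion `π_P = τ_{n-1}^* ∘ ⋯ ∘ τ_1^*` (file 1 toggled first). -/
def plPromo (a b : ℕ) (f : Fin a × Fin b → ℝ) : Fin a × Fin b → ℝ :=
  (List.range (a + b - 1)).foldl (fun g k => plFileToggle a b (k + 1) g) f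

/-- The birational file-toggle `τ_k^*`. -/
def bFileToggle (a b k : ℕ) (f : Fin a × Fin b → ℝ) : Fin a × Fin b → ℝ :=
  fun x => if InFile a b k x then bL f x * bR f x / f x else f x

/-- Birational promotion `π_B = τ_{n-1}^* ∘ ⋯ ∘ τ_1^*` (file 1 toggled first). -/
def bPromo (a b : ℕ) (f : Fin a × Fin b → ℝ) : Fin a × Fin b → ℝ :=
  (List.range (a + b - 1)).foldl (fun g k => bFileToggle a b (k + 1) g) f

/-- The antipode map `(i, j) ↦ (a + 1 - i, b + 1 - j)` (in 1-based coordinates). -/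
def antipode {a b : ℕ} (x : Fin a × Fin b) : Fin a × Fin b := (x.1.rev, x.2.rev)

/-- `p_k`: the product of the values of `f` over the `k`-th file (equal to `1` for `k = 0`
and `k = a + b`, since those files are empty). -/
def fileProd (a b : ℕ) (f : Fin a × Fin b → ℝ) (k : ℕ) : ℝ :=
  ∏ x : Fin a × Fin b, if InFile a b k x then f x else 1

/-- The quotient sequence `Q(f) = (q_1, …, q_n)`, `q_k = p_k / p_{k-1}`. -/
def quotSeq (a b : ℕ) (f : Fin a × Fin b → ℝ) (k : ℕ) : ℝ :=
  fileProd a b f k / fileProd a b f (k - 1)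

/-- Stanley's transfer map `α₂ = Φ`: `(α₂ f)(x) = min { f(x) - f(y) : y ∈ P̂, y ⋖ x }`. -/
def alpha2PL {P : Type*} [Fintype P] [PartialOrder P] (f : P → ℝ) (x : P) : ℝ :=
  sInf ((fun y => f x - extendHat 0 1 f y) '' {y | y ⋖ emb x})

lemma my_exists_cover_above (x : P) : ∃ y, emb x ⋖ y := by
  apply exists_covBy_of_wellFoundedLT
  intro h
  have : emb x < ((⊤ : WithTop P) : WithBot (WithTop P)) :=
    WithBot.coe_lt_coe.2 (WithTop.coe_lt_top x)
  exact absurd (h this.le) this.not_ge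

lemma my_exists_cover_below (x : P) : ∃ y, y ⋖ emb x := by
  apply exists_covBy_of_wellFoundedGT
  intro h
  have : (⊥ : WithBot (WithTop P)) < emb x := WithBot.bot_lt_coe _
  exact absurd (h this.le) this.not_ge

lemma my_sInf_const_sub {T : Set ℝ} (hT : T.Finite) (hne : T.Nonempty) (c : ℝ) :
    sInf ((fun x => c - x) '' T) = c - sSup T := by
  apply le_antisymm
  · exact csInf_le ((hT.image _).bddBelow) ⟨_, hne.csSup_mem hT, rfl⟩
  · apply le_csInf (hne.image _)
    rintro _ ⟨x, hx, rfl⟩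
    have := le_csSup hT.bddAbove hx
    simp only
    linarith

lemma my_alpha2 (f : P → ℝ) (u : P) : alpha2PL f u = f u - plL f u := by
  have hS : ({y | y ⋖ emb u} : Set (WithBot (WithTop P))).Nonempty := my_exists_cover_below u
  have himg : (fun y => f u - extendHat 0 1 f y) '' {y | y ⋖ emb u}
      = (fun t => f u - t) '' (extendHat 0 1 f '' {y | y ⋖ emb u}) := by
    rw [Set.image_image]
  rw [alpha2PL, himg,
    my_sInf_const_sub (Set.Finite.image _ (Set.toFinite _)) (hS.image _)]
  rfl

lemma my_below_emb {y : WithBot (WithTop P)} {u : P} (h : y < emb u) :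
    y = ⊥ ∨ ∃ z : P, z < u ∧ y = emb z := by
  induction y using WithBot.recBotCoe with
  | bot => exact Or.inl rfl
  | coe a =>
    right
    induction a using WithTop.recTopCoe with
    | top => exact absurd (WithBot.coe_lt_coe.1 h) not_top_lt
    | coe z => exact ⟨z, WithTop.coe_lt_coe.1 (WithBot.coe_lt_coe.1 h), rfl⟩

lemma my_above_emb {y : WithBot (WithTop P)} {u : P} (h : emb u < y) :
    y = ((⊤ : WithTop P) : WithBot (WithTop P)) ∨ ∃ z : P, u < z ∧ y = emb z := by
  induction y using WithBot.recBotCoe with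
  | bot => exact absurd h (by simp [emb])
  | coe a =>
    induction a using WithTop.recTopCoe with
    | top => exact Or.inl rfl
    | coe z => exact Or.inr ⟨z, WithTop.coe_lt_coe.1 (WithBot.coe_lt_coe.1 h), rfl⟩

lemma my_main (f : P → ℝ) (A : WithBot (WithTop P) → ℝ)
    (hA1 : A ((⊤ : WithTop P) : WithBot (WithTop P)) = 0)
    (hA2 : ∀ x : P, A (emb x) = alpha2PL f x + sSup (A '' {y | emb x ⋖ y})) :
    ∀ ys : List P, ys.Nodup → (ys.Pairwise fun u v => ¬ v < u) →
      (∀ u ∈ ys, ∀ z : P, u < z → z ∈ ys) →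
      ∀ x : P, plRow ys f x = if x ∈ ys then 1 - A (emb x) else f x := by
  intro ys
  induction ys with
  | nil => intro _ _ _ x; simp [plRow]
  | cons u t ih =>
    intro hnd hpw hup x
    have hndt : t.Nodup := hnd.of_cons
    have hpwt : t.Pairwise fun u v => ¬ v < u := hpw.of_cons
    have hut : u ∉ t := (List.nodup_cons.1 hnd).1
    have hpu : ∀ v ∈ t, ¬ v < u := (List.pairwise_cons.1 hpw).1
    have hupt : ∀ v ∈ t, ∀ z : P, v < z → z ∈ t := by
      intro v hv z hz
      rcases List.mem_cons.1 (hup v (List.mem_cons_of_mem _ hv) z hz) with rfl | h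
      · exact absurd hz (hpu v hv)
      · exact h
    have iht := ih hndt hpwt hupt
    have hrow : plRow (u :: t) f = plToggle u (plRow t f) := rfl
    set h := plRow t f with hh
    have hbelow : ∀ z : P, z < u → h z = f z := by
      intro z hz
      rw [iht z, if_neg (fun hzt => hpu z hzt hz)]
    have hu : h u = f u := by rw [iht u, if_neg hut]
    have habove : ∀ z : P, u < z → h z = 1 - A (emb z) := by
      intro z hz
      have hzt : z ∈ t := by
        rcases List.mem_cons.1 (hup u List.mem_cons_self z hz) with rfl | h'
        · exact absurd hz (lt_irrefl _)
        · exact h'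
      rw [iht z, if_pos hzt]
    have hLeq : extendHat 0 1 h '' {y | y ⋖ emb u} = extendHat 0 1 f '' {y | y ⋖ emb u} := by
      apply Set.image_congr
      intro y hy
      rcases my_below_emb hy.lt with rfl | ⟨z, hz, rfl⟩
      · rfl
      · simpa [extendHat, emb] using hbelow z hz
    have hReq : extendHat 0 1 h '' {y | emb u ⋖ y} = (fun y => 1 - A y) '' {y | emb u ⋖ y} := by
      apply Set.image_congr
      intro y hy
      rcases my_above_emb hy.lt with rfl | ⟨z, hz, rfl⟩
      · show extendHat 0 1 h _ = 1 - A _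
        rw [hA1, extendHat, WithBot.recBotCoe_coe, WithTop.recTopCoe_top]
        ring
      · simpa [extendHat, emb] using habove z hz
    by_cases hx : x = u
    · subst hx
      rw [hrow]
      show Function.update h x (plL h x + plR h x - h x) x = _
      rw [Function.update_self]
      have hS : ({y | emb x ⋖ y} : Set (WithBot (WithTop P))).Nonempty :=
        my_exists_cover_above x
      have hR : plR h x = 1 - sSup (A '' {y | emb x ⋖ y}) := by
        rw [plR, hReq,
          show (fun y => 1 - A y) '' {y | emb x ⋖ y}
            = (fun t => 1 - t) '' (A '' {y | emb x ⋖ y}) from (Set.image_image _ _ _).symm]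
        exact my_sInf_const_sub (Set.Finite.image _ (Set.toFinite _)) (hS.image _) 1
      have hL : plL h x = plL f x := by rw [plL, hLeq]; rfl
      rw [if_pos List.mem_cons_self, hA2 x, my_alpha2, hL, hR, hu]
      ring
    · rw [hrow]
      show Function.update h u (plL h u + plR h u - h u) x = _
      rw [Function.update_of_ne hx, iht x]
      simp [List.mem_cons, hx]

/-- `ρ_P = α₁ ∘ α₃ ∘ α₂` on the order polytope: if `A` realizes the downward recursion defining
`α₃ (α₂ f)` (with `A(1̂) = 0` and `A(x) = (α₂ f)(x) + max { A(y) : y ∈ P̂, y ⋗ x }`), then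
`(ρ_P f)(x) = 1 - A(x)` for all `x ∈ P`. -/
theorem stmt2 {P : Type*} [Fintype P] [PartialOrder P]
    (xs : List P) (hxs : IsLinearExt xs)
    (f : P → ℝ) (hf : InOrderPolytope f)
    (A : WithBot (WithTop P) → ℝ)
    (hA1 : A ((⊤ : WithTop P) : WithBot (WithTop P)) = 0)
    (hA2 : ∀ x : P, A (emb x) = alpha2PL f x + sSup (A '' {y | emb x ⋖ y})) :
    ∀ x : P, plRow xs f x = 1 - A (emb x) := by
  intro x
  obtain ⟨hnd, hall, hpw⟩ := hxs
  rw [my_main f A hA1 hA2 xs hnd hpw (fun u _ z _ => hall z) x, if_pos (hall x)]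


end
end

section
/- For any finite poset P, birational rowmotion factors as ρ_B = α1∘α3∘α2 as maps on (ℝ>0)^P, where (α2 f)(x) = ( Σ_{y ∈ P̂, y covered by x} f(y)/f(x) )⁻¹ (the parallel sum of the quotients f(x)/f(y) over the elements y covered by x), α3 is defined by the downward recursion (α3 g)(x) = g(x) · Σ_{y ∈ P̂, y covers x} (α3 g)(y) with (α3 g)(1̂) = 1, and (α1 h)(x) = 1/h(x). -/
open scoped Classical

noncomputable section

variable {P : Type*} [Fintype P] [PartialOrder P]

/-- The birational transfer map `α₂`: `(α₂ f)(x)` is the parallel sum of the quotients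
`f(x)/f(y)` over the elements `y ∈ P̂` covered by `x`, i.e. `(Σ_{y ⋖ x} f(y)/f(x))⁻¹`. -/
def alpha2B {P : Type*} [Fintype P] [PartialOrder P] (f : P → ℝ) (x : P) : ℝ :=
  (∑ y : WithBot (WithTop P), if y ⋖ emb x then extendHat 1 1 f y / f x else 0)⁻¹

lemma key_lemma {P : Type*} [Fintype P] [PartialOrder P]
    (f : P → ℝ) (A : WithBot (WithTop P) → ℝ)
    (hA1 : A ((⊤ : WithTop P) : WithBot (WithTop P)) = 1)
    (hA2 : ∀ x : P, A (emb x) =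
      alpha2B f x * ∑ y : WithBot (WithTop P), if emb x ⋖ y then A y else 0) :
    ∀ ys : List P, ys.Nodup → (ys.Pairwise fun u v => ¬ v < u) →
      (∀ x ∈ ys, ∀ y : P, x < y → y ∈ ys) →
      (∀ x ∉ ys, bRow ys f x = f x) ∧ (∀ x ∈ ys, bRow ys f x = (A (emb x))⁻¹) := by
  intro ys
  induction ys with
  | nil => intro _ _ _; exact ⟨fun x _ => rfl, fun x hx => absurd hx List.not_mem_nil⟩
  | cons x t ih =>
    intro hnd hpw hup
    have hxt : x ∉ t := (List.nodup_cons.mp hnd).1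
    have hndt : t.Nodup := (List.nodup_cons.mp hnd).2
    have hvx : ∀ v ∈ t, ¬ v < x := (List.pairwise_cons.mp hpw).1
    have hpwt : t.Pairwise fun u v => ¬ v < u := (List.pairwise_cons.mp hpw).2
    have hupt : ∀ u ∈ t, ∀ y : P, u < y → y ∈ t := by
      intro u hu y huy
      have hy : y ∈ x :: t := hup u (List.mem_cons_of_mem x hu) y huy
      rcases List.mem_cons.mp hy with h | h
      · exact absurd (h ▸ huy) (hvx u hu)
      · exact h
    obtain ⟨IH1, IH2⟩ := ih hndt hpwt hupt
    set g : P → ℝ := bRow t f with hg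
    have hfold : bRow (x :: t) f = bToggle x g := rfl
    have hgx : g x = f x := IH1 x hxt
    -- bL g x = bL f x
    have hbL : bL g x = bL f x := by
      unfold bL
      refine Finset.sum_congr rfl fun y _ => ?_
      by_cases hc : y ⋖ emb x
      · simp only [if_pos hc]
        induction y using WithBot.recBotCoe with
        | bot => simp [extendHat]
        | coe z =>
          induction z using WithTop.recTopCoe with
          | top =>
            exact absurd hc.1 (by simp [emb, WithBot.coe_lt_coe])
          | coe u =>
            have hu : u < x := by
              have := hc.1
              simpa [emb, WithBot.coe_lt_coe, WithTop.coe_lt_coe] using this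
            have hut : u ∉ t := fun h => (hvx u h) hu
            simp [extendHat, IH1 u hut]
      · simp [hc]
    -- the cover sum for bR
    have hbR : (∑ y : WithBot (WithTop P), if emb x ⋖ y then (extendHat 1 1 g y)⁻¹ else 0)
        = ∑ y : WithBot (WithTop P), if emb x ⋖ y then A y else 0 := by
      refine Finset.sum_congr rfl fun y _ => ?_
      by_cases hc : emb x ⋖ y
      · simp only [if_pos hc]
        induction y using WithBot.recBotCoe with
        | bot => exact absurd hc.1 (by simp)
        | coe z =>
          induction z using WithTop.recTopCoe with
          | top =>
            have h1 : extendHat 1 1 g (((⊤ : WithTop P)) : WithBot (WithTop P)) = 1 := rfl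
            rw [h1, inv_one, hA1]
          | coe u =>
            have hu : x < u := by
              have := hc.1
              simpa [emb, WithBot.coe_lt_coe, WithTop.coe_lt_coe] using this
            have hut : u ∈ t := by
              have := hup x List.mem_cons_self u hu
              rcases List.mem_cons.mp this with h | h
              · exact absurd (h ▸ hu) (lt_irrefl x)
              · exact h
            simp [extendHat, emb, IH2 u hut]
      · simp [hc]
    constructor
    · intro z hz
      have hzx : z ≠ x := fun h => hz (h ▸ (List.mem_cons_self : x ∈ x :: t))
      have hzt : z ∉ t := fun h => hz (List.mem_cons_of_mem x h)
      rw [hfold]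
      unfold bToggle
      rw [Function.update_of_ne hzx]
      exact IH1 z hzt
    · intro z hz
      rcases List.mem_cons.mp hz with h | h
      · subst h
        rw [hfold]
        unfold bToggle
        rw [Function.update_self, hbL, hgx]
        unfold bR
        rw [hbR]
        -- now pure algebra
        have halpha : alpha2B f z = (bL f z / f z)⁻¹ := by
          unfold alpha2B bL
          congr 1
          rw [Finset.sum_div]
          refine Finset.sum_congr rfl fun y _ => ?_
          by_cases hc : y ⋖ emb z <;> simp [hc]
        rw [hA2 z, halpha, mul_inv, inv_inv]
        ring
      · have hzx : z ≠ x := fun he => hxt (he ▸ h)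
        rw [hfold]
        unfold bToggle
        rw [Function.update_of_ne hzx]
        exact IH2 z h

/-- `ρ_B = α₁ ∘ α₃ ∘ α₂` on `(ℝ>0)^P`: if `A` realizes the downward recursion defining
`α₃ (α₂ f)` (with `A(1̂) = 1` and `A(x) = (α₂ f)(x) · Σ { A(y) : y ∈ P̂, y ⋗ x }`), then
`(ρ_B f)(x) = A(x)⁻¹` for all `x ∈ P`. -/
theorem stmt3 {P : Type*} [Fintype P] [PartialOrder P]
    (xs : List P) (hxs : IsLinearExt xs)
    (f : P → ℝ) (hf : ∀ x, 0 < f x)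
    (A : WithBot (WithTop P) → ℝ)
    (hA1 : A ((⊤ : WithTop P) : WithBot (WithTop P)) = 1)
    (hA2 : ∀ x : P, A (emb x) =
      alpha2B f x * ∑ y : WithBot (WithTop P), if emb x ⋖ y then A y else 0) :
    ∀ x : P, bRow xs f x = (A (emb x))⁻¹ := by
  obtain ⟨hnd, hmem, hpw⟩ := hxs
  intro x
  exact (key_lemma f A hA1 hA2 xs hnd hpw (fun u _ y _ => hmem y)).2 x (hmem x)

end
end

section
/- Toggling the k-th file swaps adjacent entries of the quotient sequence: for P = [a]×[b] with n = a+b, for every f : P → ℝ>0 and every 1 ≤ k ≤ n−1, the quotient sequence Q(τ_k^* f) is obtained from Q(f) by interchanging its k-th and (k+1)-st entries. -/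
open scoped Classical

noncomputable section

variable {P : Type*} [Fintype P] [PartialOrder P]

set_option linter.unusedSectionVars false
set_option maxHeartbeats 1000000

lemma sum_hat (g : WithBot (WithTop P) → ℝ) :
    ∑ y, g y = g ⊥ + (g ⊤ + ∑ z : P, g (emb z)) := by
  have h2 : ∑ x : WithTop P, g (Option.some x) = g ⊤ + ∑ z : P, g (emb z) :=
    Fintype.sum_option (fun w : WithTop P => g (Option.some w))
  exact (Fintype.sum_option g).trans (by rw [h2]; rfl)

lemma extendHat_bot (v0 v1 : ℝ) (f : P → ℝ) : extendHat v0 v1 f ⊥ = v0 := rfl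
lemma extendHat_top (v0 v1 : ℝ) (f : P → ℝ) : extendHat v0 v1 f ⊤ = v1 := rfl
lemma extendHat_emb (v0 v1 : ℝ) (f : P → ℝ) (z : P) : extendHat v0 v1 f (emb z) = f z := rfl

lemma not_top_covby_emb (x : P) : ¬ ((⊤ : WithBot (WithTop P)) ⋖ emb x) :=
  fun h => not_top_lt h.lt
lemma not_emb_covby_bot (x : P) : ¬ (emb x ⋖ (⊥ : WithBot (WithTop P))) :=
  fun h => not_lt_bot h.lt
lemma bot_covby_emb_iff (x : P) : (⊥ : WithBot (WithTop P)) ⋖ emb x ↔ IsMin x := by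
  rw [emb, WithBot.bot_covBy_coe]
  constructor
  · intro h y hy
    exact_mod_cast h (show (y : WithTop P) ≤ x from WithTop.coe_le_coe.2 hy)
  · intro h c hc
    induction c using WithTop.recTopCoe with
    | top => exact le_top
    | coe z => exact WithTop.coe_le_coe.2 (h (WithTop.coe_le_coe.1 hc))
lemma emb_covby_top_iff (x : P) : emb x ⋖ (⊤ : WithBot (WithTop P)) ↔ IsMax x := by
  rw [emb, show (⊤ : WithBot (WithTop P)) = ((⊤ : WithTop P) : WithBot (WithTop P)) from rfl,
    WithBot.coe_covBy_coe, WithTop.coe_covBy_top]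
lemma emb_covby_emb_iff (z x : P) : emb z ⋖ emb x ↔ z ⋖ x := by
  rw [emb, emb, WithBot.coe_covBy_coe, WithTop.coe_covBy_coe]

section Aux

variable {a b : ℕ} (f : Fin a × Fin b → ℝ)

lemma fin_covby_iff {n : ℕ} (u v : Fin n) : u ⋖ v ↔ (u : ℕ) + 1 = (v : ℕ) := by
  rw [← Fin.coe_covBy_iff, Nat.covBy_iff_add_one_eq]

lemma prod_covby_iff (z x : Fin a × Fin b) :
    z ⋖ x ↔ ((z.1 : ℕ) + 1 = (x.1 : ℕ) ∧ z.2 = x.2) ∨ ((z.2 : ℕ) + 1 = (x.2 : ℕ) ∧ z.1 = x.1) := by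
  rw [← Prod.mk.eta (p := z), ← Prod.mk.eta (p := x), Prod.mk_covBy_mk_iff]
  rw [fin_covby_iff, fin_covby_iff]

lemma isMin_iff' (x : Fin a × Fin b) : IsMin x ↔ (x.1 : ℕ) = 0 ∧ (x.2 : ℕ) = 0 := by
  constructor
  · intro h
    have h2 := h (b := ((⟨0, x.1.pos⟩ : Fin a), (⟨0, x.2.pos⟩ : Fin b)))
      (by simp [Prod.le_def, Fin.le_def])
    simp [Prod.le_def, Fin.le_def] at h2
    omega
  · intro h y _
    rw [Prod.le_def, Fin.le_def, Fin.le_def]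
    omega

lemma isMax_iff' (x : Fin a × Fin b) : IsMax x ↔ (x.1 : ℕ) + 1 = a ∧ (x.2 : ℕ) + 1 = b := by
  have ha := x.1.isLt
  have hb := x.2.isLt
  constructor
  · intro h
    have h2 := h (b := ((⟨a - 1, by omega⟩ : Fin a), (⟨b - 1, by omega⟩ : Fin b)))
      (by simp [Prod.le_def, Fin.le_def]; omega)
    simp [Prod.le_def, Fin.le_def] at h2
    omega
  · intro h y hy
    have := y.1.isLt
    have := y.2.isLt
    rw [Prod.le_def, Fin.le_def, Fin.le_def] at hy ⊢
    omega

end Aux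

def gval (a b : ℕ) (f : Fin a × Fin b → ℝ) (i j : ℕ) : ℝ :=
  if h : i < a ∧ j < b then f (⟨i, h.1⟩, ⟨j, h.2⟩) else 1

def dval (a b : ℕ) (f : Fin a × Fin b → ℝ) (k i : ℕ) : ℝ :=
  if a ≤ i + k ∧ i + k < a + b then gval a b f i (i + k - a) else 1

section Aux2

variable {a b : ℕ} (f : Fin a × Fin b → ℝ)

lemma gval_pos (hf : ∀ x, 0 < f x) (i j : ℕ) : 0 < gval a b f i j := by
  unfold gval; split
  · exact hf _
  · norm_num

lemma dval_pos (hf : ∀ x, 0 < f x) (k i : ℕ) : 0 < dval a b f k i := by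
  unfold dval; split
  · exact gval_pos f hf _ _
  · norm_num

lemma gval_val {i j : ℕ} (hi : i < a) (hj : j < b) :
    gval a b f i j = f (⟨i, hi⟩, ⟨j, hj⟩) := dif_pos ⟨hi, hj⟩

lemma gval_eq (x : Fin a × Fin b) : gval a b f x.1 x.2 = f x := by
  rw [gval_val f x.1.isLt x.2.isLt]

lemma inFile_iff (k : ℕ) (x : Fin a × Fin b) :
    InFile a b k x ↔ (x.2 : ℕ) + a = (x.1 : ℕ) + k := by
  unfold InFile
  omega

lemma inFile_mk_iff (k : ℕ) (i : Fin a) (j : Fin b) :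
    InFile a b k (i, j) ↔ (j : ℕ) + a = (i : ℕ) + k := inFile_iff k (i, j)

lemma fileProd_eq (k : ℕ) : fileProd a b f k = ∏ i ∈ Finset.range a, dval a b f k i := by
  unfold fileProd
  rw [Fintype.prod_prod_type]
  rw [← Fin.prod_univ_eq_prod_range (fun i => dval a b f k i) a]
  apply Finset.prod_congr rfl
  intro i _
  by_cases hc : a ≤ (i : ℕ) + k ∧ (i : ℕ) + k < a + b
  · have hjb : (i : ℕ) + k - a < b := by omega
    rw [Finset.prod_eq_single_of_mem (⟨(i : ℕ) + k - a, hjb⟩ : Fin b) (Finset.mem_univ _)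
      (fun j _ hj => if_neg (fun hcon => hj (Fin.ext (by
        rw [inFile_mk_iff] at hcon; simp only [Fin.val_mk]; omega))))]
    rw [if_pos (by rw [inFile_mk_iff]; simp only [Fin.val_mk]; omega)]
    rw [dval, if_pos hc, gval_val f i.isLt hjb]
  · rw [show dval a b f k (i : ℕ) = 1 from if_neg hc]
    apply Finset.prod_eq_one
    intro j _
    rw [if_neg]
    rw [inFile_mk_iff]
    have := j.isLt
    omega

end Aux2

section Aux3

variable {a b : ℕ} (f : Fin a × Fin b → ℝ)

lemma bL_eval (x : Fin a × Fin b) :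
    bL f x = (if (x.1 : ℕ) = 0 ∧ (x.2 : ℕ) = 0 then (1 : ℝ) else 0)
      + ((if 0 < (x.1 : ℕ) then gval a b f ((x.1 : ℕ) - 1) (x.2 : ℕ) else 0)
      + (if 0 < (x.2 : ℕ) then gval a b f (x.1 : ℕ) ((x.2 : ℕ) - 1) else 0)) := by
  have hd1 : ((x.1 : ℕ) - 1) < a := by have := x.1.isLt; omega
  have hd2 : ((x.2 : ℕ) - 1) < b := by have := x.2.isLt; omega
  set d1 : Fin a × Fin b := (⟨(x.1 : ℕ) - 1, hd1⟩, x.2) with hd1def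
  set d2 : Fin a × Fin b := (x.1, ⟨(x.2 : ℕ) - 1, hd2⟩) with hd2def
  unfold bL
  rw [sum_hat]
  congr 1
  · rw [show ((⊥ : WithBot (WithTop (Fin a × Fin b))) ⋖ emb x) = ((x.1 : ℕ) = 0 ∧ (x.2 : ℕ) = 0)
      from by rw [bot_covby_emb_iff, isMin_iff']]
    split <;> rfl
  · rw [if_neg (not_top_covby_emb x), zero_add]
    have step : ∀ z : Fin a × Fin b,
        (if emb z ⋖ emb x then extendHat 1 1 f (emb z) else 0)
        = (if 0 < (x.1 : ℕ) ∧ z = d1 then f z else 0)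
          + (if 0 < (x.2 : ℕ) ∧ z = d2 then f z else 0) := by
      intro z
      rw [emb_covby_emb_iff, extendHat_emb]
      by_cases hz : z ⋖ x
      · rw [if_pos hz]
        rw [prod_covby_iff] at hz
        rcases hz with ⟨h1, h2⟩ | ⟨h1, h2⟩
        · have hzd : z = d1 := by
            rw [hd1def, ← Prod.mk.eta (p := z)]
            exact Prod.ext (Fin.ext (by simp only [Fin.val_mk]; omega)) h2
          rw [if_pos ⟨by omega, hzd⟩, if_neg, add_zero]
          rintro ⟨-, rfl⟩
          rw [hd2def] at h1 h2
          simp only [Fin.val_mk] at h1 h2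
          omega
        · have hzd : z = d2 := by
            rw [hd2def, ← Prod.mk.eta (p := z)]
            exact Prod.ext h2 (Fin.ext (by simp only [Fin.val_mk]; omega))
          have hnot : ¬(0 < (x.1 : ℕ) ∧ z = d1) := by
            rintro ⟨-, rfl⟩
            rw [hd1def] at h1 h2
            simp only [Fin.val_mk] at h1 h2
            omega
          rw [if_neg hnot, if_pos ⟨by omega, hzd⟩, zero_add]
      · rw [if_neg hz, if_neg, if_neg, add_zero]
        · rintro ⟨h1, rfl⟩
          exact hz ((prod_covby_iff d2 x).mpr (Or.inr ⟨by simp only [hd2def, Fin.val_mk]; omega, rfl⟩))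
        · rintro ⟨h1, rfl⟩
          exact hz ((prod_covby_iff d1 x).mpr (Or.inl ⟨by simp only [hd1def, Fin.val_mk]; omega, rfl⟩))
    rw [Finset.sum_congr rfl (fun z _ => step z), Finset.sum_add_distrib]
    congr 1
    · by_cases h : 0 < (x.1 : ℕ)
      · rw [if_pos h]
        calc ∑ z : Fin a × Fin b, (if 0 < (x.1 : ℕ) ∧ z = d1 then f z else 0)
            = ∑ z : Fin a × Fin b, (if z = d1 then f z else 0) :=
              Finset.sum_congr rfl (fun z _ => by simp [h])
          _ = f d1 := by rw [Finset.sum_ite_eq' Finset.univ d1 f, if_pos (Finset.mem_univ _)]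
          _ = gval a b f ((x.1 : ℕ) - 1) (x.2 : ℕ) := by
              rw [gval_val f hd1 x.2.isLt]
      · rw [if_neg h]
        exact Finset.sum_eq_zero fun z _ => if_neg (by rintro ⟨hh, -⟩; exact h hh)
    · by_cases h : 0 < (x.2 : ℕ)
      · rw [if_pos h]
        calc ∑ z : Fin a × Fin b, (if 0 < (x.2 : ℕ) ∧ z = d2 then f z else 0)
            = ∑ z : Fin a × Fin b, (if z = d2 then f z else 0) :=
              Finset.sum_congr rfl (fun z _ => by simp [h])
          _ = f d2 := by rw [Finset.sum_ite_eq' Finset.univ d2 f, if_pos (Finset.mem_univ _)]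
          _ = gval a b f (x.1 : ℕ) ((x.2 : ℕ) - 1) := by
              rw [gval_val f x.1.isLt hd2]
      · rw [if_neg h]
        exact Finset.sum_eq_zero fun z _ => if_neg (by rintro ⟨hh, -⟩; exact h hh)


lemma bR_eval (x : Fin a × Fin b) :
    bR f x = ((if (x.1 : ℕ) + 1 = a ∧ (x.2 : ℕ) + 1 = b then (1 : ℝ) else 0)
      + ((if (x.1 : ℕ) + 1 < a then (gval a b f ((x.1 : ℕ) + 1) (x.2 : ℕ))⁻¹ else 0)
      + (if (x.2 : ℕ) + 1 < b then (gval a b f (x.1 : ℕ) ((x.2 : ℕ) + 1))⁻¹ else 0)))⁻¹ := by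
  have hd1 : min ((x.1 : ℕ) + 1) (a - 1) < a := by have := x.1.isLt; omega
  have hd2 : min ((x.2 : ℕ) + 1) (b - 1) < b := by have := x.2.isLt; omega
  set u1 : Fin a × Fin b := (⟨min ((x.1 : ℕ) + 1) (a - 1), hd1⟩, x.2) with hu1def
  set u2 : Fin a × Fin b := (x.1, ⟨min ((x.2 : ℕ) + 1) (b - 1), hd2⟩) with hu2def
  unfold bR
  congr 1
  rw [sum_hat]
  rw [if_neg (not_emb_covby_bot x), zero_add]
  congr 1
  · rw [show (emb x ⋖ (⊤ : WithBot (WithTop (Fin a × Fin b))))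
        = ((x.1 : ℕ) + 1 = a ∧ (x.2 : ℕ) + 1 = b)
      from by rw [emb_covby_top_iff, isMax_iff']]
    split
    · exact inv_one
    · rfl
  · have step : ∀ z : Fin a × Fin b,
        (if emb x ⋖ emb z then (extendHat 1 1 f (emb z))⁻¹ else 0)
        = (if (x.1 : ℕ) + 1 < a ∧ z = u1 then (f z)⁻¹ else 0)
          + (if (x.2 : ℕ) + 1 < b ∧ z = u2 then (f z)⁻¹ else 0) := by
      intro z
      rw [emb_covby_emb_iff, extendHat_emb]
      by_cases hz : x ⋖ z
      · rw [if_pos hz]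
        rw [prod_covby_iff] at hz
        rcases hz with ⟨h1, h2⟩ | ⟨h1, h2⟩
        · have hia : (x.1 : ℕ) + 1 < a := by have := z.1.isLt; omega
          have hzd : z = u1 := by
            rw [hu1def, ← Prod.mk.eta (p := z)]
            exact Prod.ext (Fin.ext (by simp only [Fin.val_mk]; omega)) h2.symm
          rw [if_pos ⟨hia, hzd⟩, if_neg, add_zero]
          rintro ⟨hh, rfl⟩
          rw [hu2def] at h1 h2
          simp only [Fin.val_mk] at h1 h2
          omega
        · have hib : (x.2 : ℕ) + 1 < b := by have := z.2.isLt; omega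
          have hzd : z = u2 := by
            rw [hu2def, ← Prod.mk.eta (p := z)]
            exact Prod.ext h2.symm (Fin.ext (by simp only [Fin.val_mk]; omega))
          have hnot : ¬((x.1 : ℕ) + 1 < a ∧ z = u1) := by
            rintro ⟨hh, rfl⟩
            rw [hu1def] at h1 h2
            simp only [Fin.val_mk] at h1 h2
            omega
          rw [if_neg hnot, if_pos ⟨hib, hzd⟩, zero_add]
      · rw [if_neg hz, if_neg, if_neg, add_zero]
        · rintro ⟨hh, rfl⟩
          exact hz ((prod_covby_iff x u2).mpr
            (Or.inr ⟨by simp only [hu2def, Fin.val_mk]; omega, rfl⟩))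
        · rintro ⟨hh, rfl⟩
          exact hz ((prod_covby_iff x u1).mpr
            (Or.inl ⟨by simp only [hu1def, Fin.val_mk]; omega, rfl⟩))
    rw [Finset.sum_congr rfl (fun z _ => step z), Finset.sum_add_distrib]
    congr 1
    · by_cases h : (x.1 : ℕ) + 1 < a
      · rw [if_pos h]
        calc ∑ z : Fin a × Fin b, (if (x.1 : ℕ) + 1 < a ∧ z = u1 then (f z)⁻¹ else 0)
            = ∑ z : Fin a × Fin b, (if z = u1 then (f z)⁻¹ else 0) :=
              Finset.sum_congr rfl (fun z _ => by simp [h])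
          _ = (f u1)⁻¹ := by
              rw [Finset.sum_ite_eq' Finset.univ u1 (fun z => (f z)⁻¹),
                if_pos (Finset.mem_univ _)]
          _ = (gval a b f ((x.1 : ℕ) + 1) (x.2 : ℕ))⁻¹ := by
              rw [gval_val f (show (x.1 : ℕ) + 1 < a from h) x.2.isLt]
              rw [hu1def]
              congr 3
              exact Fin.ext (by simp only [Fin.val_mk]; omega)
      · rw [if_neg h]
        exact Finset.sum_eq_zero fun z _ => if_neg (by rintro ⟨hh, -⟩; exact h hh)
    · by_cases h : (x.2 : ℕ) + 1 < b
      · rw [if_pos h]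
        calc ∑ z : Fin a × Fin b, (if (x.2 : ℕ) + 1 < b ∧ z = u2 then (f z)⁻¹ else 0)
            = ∑ z : Fin a × Fin b, (if z = u2 then (f z)⁻¹ else 0) :=
              Finset.sum_congr rfl (fun z _ => by simp [h])
          _ = (f u2)⁻¹ := by
              rw [Finset.sum_ite_eq' Finset.univ u2 (fun z => (f z)⁻¹),
                if_pos (Finset.mem_univ _)]
          _ = (gval a b f (x.1 : ℕ) ((x.2 : ℕ) + 1))⁻¹ := by
              rw [gval_val f x.1.isLt (show (x.2 : ℕ) + 1 < b from h)]
              rw [hu2def]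
              congr 3
              exact Fin.ext (by simp only [Fin.val_mk]; omega)
      · rw [if_neg h]
        exact Finset.sum_eq_zero fun z _ => if_neg (by rintro ⟨hh, -⟩; exact h hh)

end Aux3

def lfile (a b : ℕ) (f : Fin a × Fin b → ℝ) (k i : ℕ) : ℝ :=
  (if i = 0 ∧ i + k = a then (1 : ℝ) else 0)
    + ((if 0 < i then dval a b f (k + 1) (i - 1) else 0)
    + (if a < i + k then dval a b f (k - 1) i else 0))

def rfile (a b : ℕ) (f : Fin a × Fin b → ℝ) (k i : ℕ) : ℝ :=
  ((if i + 1 = a ∧ i + k + 1 = a + b then (1 : ℝ) else 0)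
    + ((if i + 1 < a then (dval a b f (k - 1) (i + 1))⁻¹ else 0)
    + (if i + k + 1 < a + b then (dval a b f (k + 1) i)⁻¹ else 0)))⁻¹

section Aux4

variable {a b : ℕ} (f : Fin a × Fin b → ℝ)

lemma bL_file (k : ℕ) (hk : 1 ≤ k) (x : Fin a × Fin b)
    (hx : (x.2 : ℕ) + a = (x.1 : ℕ) + k) : bL f x = lfile a b f k (x.1 : ℕ) := by
  have h1 := x.1.isLt
  have h2 := x.2.isLt
  rw [bL_eval, lfile]
  congr 1
  · exact if_congr (by omega) rfl rfl
  congr 1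
  · by_cases h : 0 < (x.1 : ℕ)
    · rw [if_pos h, if_pos h, dval, if_pos (by omega)]
      congr 1
      omega
    · rw [if_neg h, if_neg h]
  · by_cases h : a < (x.1 : ℕ) + k
    · rw [if_pos (show 0 < (x.2 : ℕ) by omega), if_pos h, dval, if_pos (by omega)]
      congr 1
      omega
    · rw [if_neg (show ¬ 0 < (x.2 : ℕ) by omega), if_neg h]

lemma bR_file (k : ℕ) (hk : 1 ≤ k) (x : Fin a × Fin b)
    (hx : (x.2 : ℕ) + a = (x.1 : ℕ) + k) : bR f x = rfile a b f k (x.1 : ℕ) := by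
  have h1 := x.1.isLt
  have h2 := x.2.isLt
  rw [bR_eval, rfile]
  congr 2
  · exact if_congr (by omega) rfl rfl
  congr 1
  · by_cases h : (x.1 : ℕ) + 1 < a
    · rw [if_pos h, if_pos h, dval, if_pos (by omega)]
      congr 2
      omega
    · rw [if_neg h, if_neg h]
  · by_cases h : (x.1 : ℕ) + k + 1 < a + b
    · rw [if_pos (show (x.2 : ℕ) + 1 < b by omega), if_pos h, dval, if_pos (by omega)]
      congr 2
      omega
    · rw [if_neg (show ¬ (x.2 : ℕ) + 1 < b by omega), if_neg h]

lemma step_mul (hf : ∀ x, 0 < f x) (k i : ℕ) (hk : 1 ≤ k)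
    (h1 : a ≤ i + k) (h2 : i + 1 < a) (h3 : i + k + 1 < a + b) :
    rfile a b f k i * lfile a b f k (i + 1)
      = dval a b f (k - 1) (i + 1) * dval a b f (k + 1) i := by
  rw [rfile, lfile]
  rw [if_neg (by omega : ¬(i + 1 = a ∧ i + k + 1 = a + b)), if_pos h2, if_pos h3,
    if_neg (by omega : ¬(i + 1 = 0 ∧ i + 1 + k = a)), if_pos (by omega : 0 < i + 1),
    if_pos (by omega : a < i + 1 + k), Nat.add_sub_cancel]
  have hu : 0 < dval a b f (k - 1) (i + 1) := dval_pos f hf _ _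
  have hv : 0 < dval a b f (k + 1) i := dval_pos f hf _ _
  set u := dval a b f (k - 1) (i + 1)
  set v := dval a b f (k + 1) i
  rw [zero_add, zero_add]
  rw [inv_add_inv hu.ne' hv.ne', inv_div]
  rw [div_mul_eq_mul_div, div_eq_iff (by positivity)]
  ring

end Aux4

section Aux5

variable {a b : ℕ} (f : Fin a × Fin b → ℝ)

lemma lfile_lo (k : ℕ) (hk1 : 1 ≤ k) (hk2 : k ≤ a + b - 1) (ha : 1 ≤ a) (hb : 1 ≤ b) :
    lfile a b f k (a - k)
      = (if a < k then dval a b f (k - 1) 0 else 1)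
        * (if k < a then dval a b f (k + 1) (a - k - 1) else 1) := by
  rw [lfile]
  rcases lt_trichotomy k a with h | h | h
  · rw [if_neg (show ¬(a - k = 0 ∧ a - k + k = a) by omega),
      if_pos (show 0 < a - k by omega), if_neg (show ¬ a < a - k + k by omega),
      if_neg (show ¬ a < k by omega), if_pos h, one_mul, add_zero, zero_add]
  · rw [if_pos (show (a - k = 0 ∧ a - k + k = a) by omega),
      if_neg (show ¬ 0 < a - k by omega), if_neg (show ¬ a < a - k + k by omega),
      if_neg (show ¬ a < k by omega), if_neg (show ¬ k < a by omega)]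
    norm_num
  · rw [if_neg (show ¬(a - k = 0 ∧ a - k + k = a) by omega),
      if_neg (show ¬ 0 < a - k by omega), if_pos (show a < a - k + k by omega),
      if_pos (show a < k by omega), if_neg (show ¬ k < a by omega)]
    rw [show a - k = 0 by omega]
    norm_num

lemma rfile_hi (k : ℕ) (hk1 : 1 ≤ k) (hk2 : k ≤ a + b - 1) (ha : 1 ≤ a) (hb : 1 ≤ b) :
    rfile a b f k (min (a - 1) (a + b - 1 - k))
      = (if b < k then dval a b f (k - 1) (min (a - 1) (a + b - 1 - k) + 1) else 1)
        * (if k < b then dval a b f (k + 1) (min (a - 1) (a + b - 1 - k)) else 1) := by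
  rw [rfile]
  rcases lt_trichotomy k b with h | h | h
  · rw [show min (a - 1) (a + b - 1 - k) = a - 1 by omega]
    rw [if_neg (by omega : ¬(a - 1 + 1 = a ∧ a - 1 + k + 1 = a + b)),
      if_neg (by omega : ¬ a - 1 + 1 < a), if_pos (by omega : a - 1 + k + 1 < a + b),
      if_neg (by omega), if_pos h, one_mul, zero_add, zero_add, inv_inv]
  · rw [show min (a - 1) (a + b - 1 - k) = a - 1 by omega]
    rw [if_pos (by omega : a - 1 + 1 = a ∧ a - 1 + k + 1 = a + b),
      if_neg (by omega : ¬ a - 1 + 1 < a), if_neg (by omega : ¬ a - 1 + k + 1 < a + b),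
      if_neg (by omega), if_neg (by omega)]
    norm_num
  · rw [show min (a - 1) (a + b - 1 - k) = a + b - 1 - k by omega]
    rw [if_neg (by omega : ¬(a + b - 1 - k + 1 = a ∧ a + b - 1 - k + k + 1 = a + b)),
      if_pos (by omega : a + b - 1 - k + 1 < a),
      if_neg (by omega : ¬ a + b - 1 - k + k + 1 < a + b),
      if_pos h, if_neg (by omega), mul_one, zero_add, add_zero, inv_inv]

lemma telescope (hf : ∀ x, 0 < f x) (k : ℕ) (hk1 : 1 ≤ k) (hk2 : k ≤ a + b - 1)
    (ha : 1 ≤ a) (hb : 1 ≤ b) :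
    ∀ t, a - k ≤ t → t ≤ min (a - 1) (a + b - 1 - k) →
      ∏ i ∈ Finset.Icc (a - k) t, (lfile a b f k i * rfile a b f k i)
        = lfile a b f k (a - k)
          * (∏ i ∈ Finset.Ico (a - k) t, (dval a b f (k - 1) (i + 1) * dval a b f (k + 1) i))
          * rfile a b f k t := by
  intro t ht
  induction t, ht using Nat.le_induction with
  | base =>
    intro _
    rw [Finset.Icc_self, Finset.prod_singleton, Finset.Ico_self, Finset.prod_empty]
    ring
  | succ n hn ih =>
    intro hle
    rw [Finset.prod_Icc_succ_top (by omega), ih (by omega), Finset.prod_Ico_succ_top hn]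
    have hs := step_mul f hf k n hk1 (by omega) (by omega) (by omega)
    calc lfile a b f k (a - k)
          * (∏ i ∈ Finset.Ico (a - k) n, (dval a b f (k - 1) (i + 1) * dval a b f (k + 1) i))
          * rfile a b f k n * (lfile a b f k (n + 1) * rfile a b f k (n + 1))
        = lfile a b f k (a - k)
          * ((∏ i ∈ Finset.Ico (a - k) n, (dval a b f (k - 1) (i + 1) * dval a b f (k + 1) i))
            * (rfile a b f k n * lfile a b f k (n + 1)))
          * rfile a b f k (n + 1) := by ring
      _ = _ := by rw [hs]

lemma prod_range_dval (m : ℕ) (ha : 1 ≤ a) :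
    ∏ i ∈ Finset.range a, dval a b f m i
      = ∏ i ∈ Finset.Icc (a - m) (min (a - 1) (a + b - 1 - m)), dval a b f m i := by
  symm
  apply Finset.prod_subset
  · intro i hi
    rw [Finset.mem_Icc] at hi
    rw [Finset.mem_range]
    omega
  · intro i hi hni
    rw [Finset.mem_range] at hi
    rw [Finset.mem_Icc] at hni
    rw [dval, if_neg (by omega)]

lemma prod_Ico_congr (g : ℕ → ℝ) {u v u' v' : ℕ} (h1 : u = u') (h2 : v = v') :
    ∏ i ∈ Finset.Ico u v, g i = ∏ i ∈ Finset.Ico u' v', g i := by rw [h1, h2]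

lemma prod_Ico_shift (g : ℕ → ℝ) (lo hi : ℕ) :
    ∏ i ∈ Finset.Ico lo hi, g (i + 1) = ∏ i ∈ Finset.Ico (lo + 1) (hi + 1), g i := by
  rw [Finset.prod_Ico_eq_prod_range, Finset.prod_Ico_eq_prod_range]
  rw [show hi + 1 - (lo + 1) = hi - lo by omega]
  exact Finset.prod_congr rfl fun i _ => by rw [show lo + 1 + i = lo + i + 1 by omega]

end Aux5

section Aux6

variable {a b : ℕ} (f : Fin a × Fin b → ℝ)

lemma fileProd_pos (hf : ∀ x, 0 < f x) (m : ℕ) : 0 < fileProd a b f m := by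
  unfold fileProd
  apply Finset.prod_pos
  intro x _
  split
  · exact hf x
  · norm_num

lemma fileProd_untoggled (k m : ℕ) (hm : m ≠ k) :
    fileProd a b (bFileToggle a b k f) m = fileProd a b f m := by
  unfold fileProd
  apply Finset.prod_congr rfl
  intro x _
  by_cases h : InFile a b m x
  · rw [if_pos h, if_pos h]
    rw [bFileToggle, if_neg]
    rw [inFile_iff] at h ⊢
    omega
  · rw [if_neg h, if_neg h]

lemma key (hf : ∀ x, 0 < f x) (k : ℕ) (hk1 : 1 ≤ k) (hk2 : k ≤ a + b - 1)
    (ha : 1 ≤ a) (hb : 1 ≤ b) :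
    fileProd a b (bFileToggle a b k f) k * fileProd a b f k
      = fileProd a b f (k - 1) * fileProd a b f (k + 1) := by
  have hlohi : (a - k) ≤ (min (a - 1) (a + b - 1 - k)) := by omega
  rw [fileProd_eq, fileProd_eq, fileProd_eq, fileProd_eq, ← Finset.prod_mul_distrib]
  have hshrink : ∏ i ∈ Finset.range a, (dval a b (bFileToggle a b k f) k i * dval a b f k i)
      = ∏ i ∈ Finset.Icc (a - k) (min (a - 1) (a + b - 1 - k)), (lfile a b f k i * rfile a b f k i) := by
    rw [show ∏ i ∈ Finset.range a, (dval a b (bFileToggle a b k f) k i * dval a b f k i)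
        = ∏ i ∈ Finset.Icc (a - k) (min (a - 1) (a + b - 1 - k)), (dval a b (bFileToggle a b k f) k i * dval a b f k i) from by
      symm
      apply Finset.prod_subset
      · intro i hmem
        rw [Finset.mem_Icc] at hmem
        rw [Finset.mem_range]
        omega
      · intro i hmem hnm
        rw [Finset.mem_range] at hmem
        rw [Finset.mem_Icc] at hnm
        rw [dval, if_neg (by omega), dval, if_neg (by omega), one_mul]]
    apply Finset.prod_congr rfl
    intro i hmem
    rw [Finset.mem_Icc] at hmem
    have hia : i < a := by omega
    have hjb : i + k - a < b := by omega
    have hg : a ≤ i + k ∧ i + k < a + b := by omega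
    set x : Fin a × Fin b := (⟨i, hia⟩, ⟨i + k - a, hjb⟩) with hxdef
    have hxval : (x.2 : ℕ) + a = (x.1 : ℕ) + k := by
      rw [hxdef]
      simp only [Fin.val_mk]
      omega
    rw [dval, if_pos hg, dval, if_pos hg, gval_val _ hia hjb, gval_val _ hia hjb]
    rw [show (bFileToggle a b k f) (⟨i, hia⟩, ⟨i + k - a, hjb⟩)
        = bL f x * bR f x / f x from by
      rw [bFileToggle, if_pos]
      rw [inFile_mk_iff]
      simp only [Fin.val_mk]
      omega]
    rw [div_mul_cancel₀ _ (hf x).ne']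
    rw [bL_file f k hk1 x hxval, bR_file f k hk1 x hxval]
  rw [hshrink, telescope f hf k hk1 hk2 ha hb (min (a - 1) (a + b - 1 - k)) hlohi le_rfl, Finset.prod_mul_distrib,
    prod_Ico_shift, lfile_lo f k hk1 hk2 ha hb, rfile_hi f k hk1 hk2 ha hb,
    prod_range_dval f (k - 1) ha, prod_range_dval f (k + 1) ha]
  have hA : ∏ i ∈ Finset.Icc (a - (k - 1)) (min (a - 1) (a + b - 1 - (k - 1))),
        dval a b f (k - 1) i
      = (if a < k then dval a b f (k - 1) 0 else 1)
        * (∏ i ∈ Finset.Ico ((a - k) + 1) ((min (a - 1) (a + b - 1 - k)) + 1), dval a b f (k - 1) i)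
        * (if b < k then dval a b f (k - 1) ((min (a - 1) (a + b - 1 - k)) + 1) else 1) := by
    rcases le_or_gt k a with h1 | h1 <;> rcases le_or_gt k b with h2 | h2
    · rw [if_neg (by omega), if_neg (by omega), one_mul, mul_one, ← Finset.Ico_add_one_right_eq_Icc]
      exact prod_Ico_congr _ (by omega) (by omega)
    · rw [if_neg (by omega), if_pos h2, one_mul,
        show min (a - 1) (a + b - 1 - (k - 1)) = (min (a - 1) (a + b - 1 - k)) + 1 by omega,
        Finset.prod_Icc_succ_top (by omega), ← Finset.Ico_add_one_right_eq_Icc]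
      congr 1
      exact prod_Ico_congr _ (by omega) (by omega)
    · rw [if_pos h1, if_neg (by omega), mul_one, ← Finset.Ico_add_one_right_eq_Icc,
        Finset.prod_eq_prod_Ico_succ_bot (by omega),
        show a - (k - 1) = 0 by omega]
      congr 1
      exact prod_Ico_congr _ (by omega) (by omega)
    · rw [if_pos h1, if_pos h2,
        show min (a - 1) (a + b - 1 - (k - 1)) = (min (a - 1) (a + b - 1 - k)) + 1 by omega,
        Finset.prod_Icc_succ_top (by omega), ← Finset.Ico_add_one_right_eq_Icc,
        Finset.prod_eq_prod_Ico_succ_bot (by omega),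
        show a - (k - 1) = 0 by omega]
      congr 1
      congr 1
      exact prod_Ico_congr _ (by omega) (by omega)
  have hB : ∏ i ∈ Finset.Icc (a - (k + 1)) (min (a - 1) (a + b - 1 - (k + 1))),
        dval a b f (k + 1) i
      = (if k < a then dval a b f (k + 1) (a - k - 1) else 1)
        * (∏ i ∈ Finset.Ico (a - k) (min (a - 1) (a + b - 1 - k)), dval a b f (k + 1) i)
        * (if k < b then dval a b f (k + 1) (min (a - 1) (a + b - 1 - k)) else 1) := by
    rcases le_or_gt a k with h1 | h1 <;> rcases le_or_gt b k with h2 | h2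
    · rw [if_neg (by omega), if_neg (by omega), one_mul, mul_one]
      by_cases hE : k = a + b - 1
      · rw [show min (a - 1) (a + b - 1 - (k + 1)) = 0 by omega,
          show a - (k + 1) = 0 by omega, show (a - k) = 0 by omega,
          show (min (a - 1) (a + b - 1 - k)) = 0 by omega,
          Finset.Icc_self, Finset.prod_singleton, Finset.Ico_self, Finset.prod_empty,
          dval, if_neg (by omega)]
      · rw [← Finset.Ico_add_one_right_eq_Icc]
        exact prod_Ico_congr _ (by omega) (by omega)
    · rw [if_neg (by omega), if_pos h2, one_mul,
        ← Finset.prod_Ico_succ_top (show (a - k) ≤ (min (a - 1) (a + b - 1 - k)) by omega),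
        ← Finset.Ico_add_one_right_eq_Icc]
      exact prod_Ico_congr _ (by omega) (by omega)
    · rw [if_pos h1, if_neg (by omega), mul_one,
        ← Finset.Ico_add_one_right_eq_Icc, Finset.prod_eq_prod_Ico_succ_bot (by omega),
        show a - (k + 1) = a - k - 1 by omega]
      congr 1
      exact prod_Ico_congr _ (by omega) (by omega)
    · rw [if_pos h1, if_pos h2, mul_assoc,
        ← Finset.prod_Ico_succ_top (show (a - k) ≤ (min (a - 1) (a + b - 1 - k)) by omega),
        ← Finset.Ico_add_one_right_eq_Icc, Finset.prod_eq_prod_Ico_succ_bot (by omega),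
        show a - (k + 1) = a - k - 1 by omega]
      congr 1
      exact prod_Ico_congr _ (by omega) (by omega)
  rw [hA, hB]
  ring

end Aux6

/-- Toggling the `k`-th file swaps the `k`-th and `(k+1)`-st entries of the quotient
sequence: `Q(τ_k^* f) = σ_k Q(f)`. -/
theorem stmt9 (a b : ℕ) (ha : 1 ≤ a) (hb : 1 ≤ b)
    (f : Fin a × Fin b → ℝ) (hf : ∀ x, 0 < f x)
    (k : ℕ) (hk1 : 1 ≤ k) (hk2 : k ≤ a + b - 1) :
    ∀ m, 1 ≤ m → m ≤ a + b →
      quotSeq a b (bFileToggle a b k f) m = quotSeq a b f (Equiv.swap k (k + 1) m) := by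
  intro m hm1 hm2
  have hkey := key f hf k hk1 hk2 ha hb
  have hp : ∀ n, fileProd a b f n ≠ 0 := fun n => (fileProd_pos f hf n).ne'
  by_cases h1 : m = k
  · subst h1
    rw [Equiv.swap_apply_left]
    unfold quotSeq
    rw [fileProd_untoggled f m (m - 1) (by omega), Nat.add_sub_cancel]
    rw [div_eq_div_iff (hp (m - 1)) (hp m)]
    linear_combination hkey
  · by_cases h2 : m = k + 1
    · subst h2
      rw [Equiv.swap_apply_right]
      unfold quotSeq
      rw [Nat.add_sub_cancel, fileProd_untoggled f k (k + 1) (by omega)]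
      have htog : fileProd a b (bFileToggle a b k f) k ≠ 0 := by
        intro h
        rw [h, zero_mul] at hkey
        exact (mul_pos (fileProd_pos f hf (k - 1)) (fileProd_pos f hf (k + 1))).ne' hkey.symm
      rw [div_eq_div_iff htog (hp (k - 1))]
      have hpk := hp k
      field_simp at hkey ⊢
      linear_combination -hkey
    · rw [Equiv.swap_apply_of_ne_of_ne h1 h2]
      unfold quotSeq
      rw [fileProd_untoggled f k m h1, fileProd_untoggled f k (m - 1) (by omega)]


end
end

section
/- (Cameron–Fon-der-Flaass theorem) For P = [a]×[b], combinatorial rowmotion on the set J(P) of order ideals of P has order dividing a+b: ρ^{a+b} is the identity map on J(P), where ρ(I) is the down-closure of the set of minimal elements of the complement P∖I. -/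
open scoped Classical

noncomputable section

variable {P : Type*} [Fintype P] [PartialOrder P]

/-- `I` is an order ideal (downset). -/
def IsOrderIdeal {Q : Type*} [PartialOrder Q] (I : Set Q) : Prop :=
  ∀ ⦃x⦄, x ∈ I → ∀ ⦃y⦄, y ≤ x → y ∈ I

/-- Combinatorial rowmotion: `ρ(I)` is the down-closure of the set of minimal elements of the
complementary filter `P ∖ I`. -/
def combRow {Q : Type*} [PartialOrder Q] (I : Set Q) : Set Q :=
  {y | ∃ x, x ∉ I ∧ (∀ z, z ∉ I → z ≤ x → z = x) ∧ y ≤ x}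

namespace CFDF

variable {Q : Type*} [PartialOrder Q]

/-- The membership rule for rowmotion. -/
theorem mem_combRow_iff {I : Set Q} (hI : IsOrderIdeal I) (x : Q) :
    x ∈ combRow I ↔ (∀ y, y < x → y ∈ I) ∧ (x ∈ I → ∃ z, x < z ∧ z ∈ combRow I) := by
  constructor
  · rintro ⟨m, hmI, hmin, hxm⟩
    constructor
    · intro y hy
      by_contra hyI
      exact absurd (hmin y hyI (le_trans hy.le hxm)) (by
        intro h; subst h; exact absurd (lt_of_lt_of_le hy hxm) (lt_irrefl _))
    · intro hxI
      refine ⟨m, lt_of_le_of_ne hxm ?_, ⟨m, hmI, hmin, le_refl m⟩⟩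
      rintro rfl; exact hmI hxI
  · rintro ⟨hbelow, hup⟩
    by_cases hxI : x ∈ I
    · obtain ⟨z, hxz, m, hmI, hmin, hzm⟩ := hup hxI
      exact ⟨m, hmI, hmin, le_trans hxz.le hzm⟩
    · exact ⟨x, hxI, fun z hz hzx => by
        by_contra hne
        exact hz (hbelow z (lt_of_le_of_ne hzx hne)), le_refl x⟩

/-- The toggle of a set at an element. -/
def tog (x : Q) (I : Set Q) : Set Q :=
  if x ∈ I then (if ∀ z, x < z → z ∉ I then I \ {x} else I)
  else (if ∀ y, y < x → y ∈ I then insert x I else I)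

theorem mem_tog_ne {x y : Q} (h : y ≠ x) (I : Set Q) : y ∈ tog x I ↔ y ∈ I := by
  unfold tog
  split_ifs <;> simp [Set.mem_diff, Set.mem_insert_iff, h]

theorem mem_tog_self (x : Q) (I : Set Q) :
    x ∈ tog x I ↔ ((x ∈ I ∧ ∃ z, x < z ∧ z ∈ I) ∨ (x ∉ I ∧ ∀ y, y < x → y ∈ I)) := by
  unfold tog
  split_ifs with h1 h2 h3 <;> (try push_neg at *) <;>
    simp_all [Set.mem_diff, Set.mem_insert_iff]


theorem tog_ideal {x : Q} {I : Set Q} (hI : IsOrderIdeal I) : IsOrderIdeal (tog x I) := by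
  unfold tog
  split_ifs with h1 h2 h3
  · -- removal
    rintro u ⟨huI, hux⟩ v hvu
    refine ⟨hI huI hvu, ?_⟩
    simp only [Set.mem_singleton_iff] at hux ⊢
    rintro rfl
    exact (h2 u (lt_of_le_of_ne hvu (fun h => hux h.symm))) huI
  · exact hI
  · -- insertion
    rintro u hu v hvu
    rcases hu with rfl | huI
    · rcases eq_or_lt_of_le hvu with rfl | hlt
      · exact Set.mem_insert _ _
      · exact Set.mem_insert_of_mem _ (h3 v hlt)
    · exact Set.mem_insert_of_mem _ (hI huI hvu)
  · exact hI

theorem tog_invol {x : Q} {I : Set Q} (hI : IsOrderIdeal I) : tog x (tog x I) = I := by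
  by_cases hx : x ∈ I
  · by_cases hrem : ∀ z, x < z → z ∉ I
    · have h1 : tog x I = I \ {x} := by unfold tog; rw [if_pos hx, if_pos hrem]
      rw [h1]
      have hx2 : x ∉ I \ {x} := by simp
      have hins : ∀ y, y < x → y ∈ I \ {x} := fun y hy =>
        ⟨hI hx hy.le, by simp only [Set.mem_singleton_iff]; rintro rfl; exact absurd hy (lt_irrefl _)⟩
      unfold tog
      rw [if_neg hx2, if_pos hins, Set.insert_diff_singleton, Set.insert_eq_of_mem hx]
    · have h1 : tog x I = I := by unfold tog; rw [if_pos hx, if_neg hrem]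
      rw [h1, h1]
  · by_cases hins : ∀ y, y < x → y ∈ I
    · have h1 : tog x I = insert x I := by unfold tog; rw [if_neg hx, if_pos hins]
      rw [h1]
      have hx2 : x ∈ insert x I := Set.mem_insert _ _
      have hrem : ∀ z, x < z → z ∉ insert x I := by
        intro z hz
        simp only [Set.mem_insert_iff]
        push_neg
        exact ⟨fun h => absurd (h ▸ hz) (lt_irrefl _), fun hzI => hx (hI hzI hz.le)⟩
      unfold tog
      rw [if_pos hx2, if_pos hrem, Set.insert_diff_self_of_notMem hx]
    · have h1 : tog x I = I := by unfold tog; rw [if_neg hx, if_neg hins]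
      rw [h1, h1]



/-- Congruence helper for toggles. -/
theorem mem_tog_self_congr {x : Q} {I I' : Set Q}
    (hx : x ∈ I ↔ x ∈ I') (hup : ∀ z, x < z → (z ∈ I ↔ z ∈ I'))
    (hdn : ∀ y, y < x → (y ∈ I ↔ y ∈ I')) :
    (x ∈ tog x I ↔ x ∈ tog x I') := by
  rw [mem_tog_self, mem_tog_self]
  constructor
  · rintro (⟨h1, z, hz1, hz2⟩ | ⟨h1, h2⟩)
    · exact Or.inl ⟨hx.1 h1, z, hz1, (hup z hz1).1 hz2⟩
    · exact Or.inr ⟨fun h => h1 (hx.2 h), fun y hy => (hdn y hy).1 (h2 y hy)⟩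
  · rintro (⟨h1, z, hz1, hz2⟩ | ⟨h1, h2⟩)
    · exact Or.inl ⟨hx.2 h1, z, hz1, (hup z hz1).2 hz2⟩
    · exact Or.inr ⟨fun h => h1 (hx.1 h), fun y hy => (hdn y hy).2 (h2 y hy)⟩

theorem tog_comm_incomp {x y : Q} (h1 : ¬ x ≤ y) (h2 : ¬ y ≤ x) (I : Set Q) :
    tog x (tog y I) = tog y (tog x I) := by
  have hne : x ≠ y := fun h => h1 (le_of_eq h)
  ext w
  by_cases hwx : w = x
  · subst hwx
    rw [mem_tog_ne hne]
    have e1 : w ∈ tog w (tog y I) ↔ w ∈ tog w I := by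
      refine mem_tog_self_congr (mem_tog_ne hne _) (fun z hz => mem_tog_ne ?_ _)
        (fun z hz => mem_tog_ne ?_ _)
      · rintro rfl; exact h1 hz.le
      · rintro rfl; exact h2 hz.le
    rw [e1]
  · by_cases hwy : w = y
    · subst hwy
      rw [mem_tog_ne (Ne.symm hne)]
      have e1 : w ∈ tog w (tog x I) ↔ w ∈ tog w I := by
        refine mem_tog_self_congr (mem_tog_ne (Ne.symm hne) _) (fun z hz => mem_tog_ne ?_ _)
          (fun z hz => mem_tog_ne ?_ _)
        · rintro rfl; exact h2 hz.le
        · rintro rfl; exact h1 hz.le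
      rw [e1]
    · rw [mem_tog_ne hwx, mem_tog_ne hwy, mem_tog_ne hwy, mem_tog_ne hwx]

theorem tog_eq_of_lt_notmem {x y z : Q} {I : Set Q} (hxy : x < y) (hz1 : x < z) (hz2 : z < y)
    (hzI : z ∉ I) (hyI : y ∉ I) : tog y I = I := by
  unfold tog
  rw [if_neg hyI, if_neg]
  push_neg
  exact ⟨z, hz2, hzI⟩

theorem tog_comm_between {x y : Q} {I : Set Q} (hI : IsOrderIdeal I) (hxy : x < y)
    {z : Q} (hz1 : x < z) (hz2 : z < y) :
    tog x (tog y I) = tog y (tog x I) := by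
  have hzx : z ≠ x := fun h => absurd (h ▸ hz1) (lt_irrefl _)
  by_cases hx : x ∈ I
  · by_cases hzI : z ∈ I
    · -- x is frozen in both I and tog y I
      have hy' : z ∈ tog y I := by
        rw [mem_tog_ne (fun h => absurd (h ▸ hz2) (lt_irrefl _))]; exact hzI
      have e1 : tog x I = I := by
        unfold tog
        rw [if_pos hx, if_neg]
        push_neg; exact ⟨z, hz1, hzI⟩
      have e2 : tog x (tog y I) = tog y I := by
        have hx' : x ∈ tog y I := by rw [mem_tog_ne (ne_of_lt hxy)]; exact hx
        generalize hJ : tog y I = J at hx' hy'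
        unfold tog
        rw [if_pos hx', if_neg]
        push_neg; exact ⟨z, hz1, hy'⟩
      rw [e1, e2]
    · -- z ∉ I hence y ∉ I and tog y does nothing, before or after tog x
      have hyI : y ∉ I := fun h => hzI (hI h hz2.le)
      have e1 : tog y I = I := tog_eq_of_lt_notmem hxy hz1 hz2 hzI hyI
      have e2 : tog y (tog x I) = tog x I := by
        refine tog_eq_of_lt_notmem hxy hz1 hz2 ?_ ?_
        · rw [mem_tog_ne hzx]; exact hzI
        · rw [mem_tog_ne (ne_of_gt hxy)]; exact hyI
      rw [e1, e2]
  · -- x ∉ I: z ∉ I, y ∉ I, tog y does nothing in both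
    have hzI : z ∉ I := fun h => hx (hI h hz1.le)
    have hyI : y ∉ I := fun h => hzI (hI h hz2.le)
    have e1 : tog y I = I := tog_eq_of_lt_notmem hxy hz1 hz2 hzI hyI
    have e2 : tog y (tog x I) = tog x I := by
      refine tog_eq_of_lt_notmem hxy hz1 hz2 ?_ ?_
      · rw [mem_tog_ne hzx]; exact hzI
      · rw [mem_tog_ne (ne_of_gt hxy)]; exact hyI
    rw [e1, e2]

def togList (L : List Q) (I : Set Q) : Set Q := L.foldl (fun J x => tog x J) I

theorem togList_nil (I : Set Q) : togList ([] : List Q) I = I := rfl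

theorem togList_cons (x : Q) (L : List Q) (I : Set Q) :
    togList (x :: L) I = togList L (tog x I) := rfl

theorem togList_append (L1 L2 : List Q) (I : Set Q) :
    togList (L1 ++ L2) I = togList L2 (togList L1 I) := List.foldl_append ..

theorem togList_ideal {I : Set Q} (hI : IsOrderIdeal I) (L : List Q) :
    IsOrderIdeal (togList L I) := by
  induction L generalizing I with
  | nil => exact hI
  | cons x t ih => exact ih (tog_ideal hI)

/-- Toggling every element along a reverse linear extension computes rowmotion. -/
theorem togList_correct {I : Set Q} (hI : IsOrderIdeal I) :
    ∀ (L : List Q) (J : Set Q), IsOrderIdeal J →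
    L.Nodup → (L.Pairwise fun u v => ¬ u < v) →
    (∀ ⦃u⦄, u ∈ L → ∀ ⦃v⦄, v < u → v ∈ L) →
    (∀ x, x ∉ L → (x ∈ J ↔ x ∈ combRow I)) →
    (∀ x, x ∈ L → (x ∈ J ↔ x ∈ I)) →
    togList L J = combRow I := by
  intro L
  induction L with
  | nil =>
    intro J _ _ _ _ hdone _
    rw [togList_nil]
    ext w
    exact hdone w (by simp)
  | cons x t ih =>
    intro J hJ hnd hpw hdown hdone hrest
    have hxt : x ∉ t := (List.nodup_cons.1 hnd).1
    have hup : ∀ z, x < z → (z ∈ J ↔ z ∈ combRow I) := by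
      intro z hz
      refine hdone z ?_
      intro hmem
      rcases List.mem_cons.1 hmem with rfl | hzt
      · exact absurd hz (lt_irrefl _)
      · exact (List.rel_of_pairwise_cons hpw hzt) hz
    have hdn : ∀ y, y < x → (y ∈ J ↔ y ∈ I) := by
      intro y hy
      refine hrest y ?_
      have : y ∈ x :: t := hdown (List.mem_cons_self) hy
      rcases List.mem_cons.1 this with rfl | hyt
      · exact absurd hy (lt_irrefl _)
      · exact List.mem_cons_of_mem _ hyt
    have hxmem : x ∈ J ↔ x ∈ I := hrest x (List.mem_cons_self)
    -- key membership computation at x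
    have hkey : x ∈ tog x J ↔ x ∈ combRow I := by
      rw [mem_tog_self, mem_combRow_iff hI]
      constructor
      · rintro (⟨h1, z, hz1, hz2⟩ | ⟨h1, h2⟩)
        · have hxI : x ∈ I := hxmem.1 h1
          exact ⟨fun y hy => hI hxI hy.le, fun _ => ⟨z, hz1, (hup z hz1).1 hz2⟩⟩
        · exact ⟨fun y hy => (hdn y hy).1 (h2 y hy),
            fun hxI => absurd (hxmem.2 hxI) h1⟩
      · rintro ⟨h1, h2⟩
        by_cases hxI : x ∈ I
        · obtain ⟨z, hz1, hz2⟩ := h2 hxI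
          exact Or.inl ⟨hxmem.2 hxI, z, hz1, (hup z hz1).2 hz2⟩
        · exact Or.inr ⟨fun h => hxI (hxmem.1 h), fun y hy => (hdn y hy).2 (h1 y hy)⟩
    rw [togList_cons]
    refine ih (tog x J) (tog_ideal hJ) (List.nodup_cons.1 hnd).2 (List.Pairwise.of_cons hpw)
      ?_ ?_ ?_
    · intro u hu v hv
      have : v ∈ x :: t := hdown (List.mem_cons_of_mem _ hu) hv
      rcases List.mem_cons.1 this with rfl | hvt
      · exact absurd hv ((List.rel_of_pairwise_cons hpw hu) ·)
      · exact hvt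
    · intro w hw
      by_cases hwx : w = x
      · subst hwx; exact hkey
      · rw [mem_tog_ne hwx]
        exact hdone w (by simp [hwx, hw])
    · intro w hw
      have hwx : w ≠ x := fun h => hxt (h ▸ hw)
      rw [mem_tog_ne hwx]
      exact hrest w (List.mem_cons_of_mem _ hw)

/-- The subtype of order ideals. -/
abbrev IdealT (Q : Type*) [PartialOrder Q] := {I : Set Q // IsOrderIdeal I}

/-- Toggle as a permutation of the set of order ideals. -/
def togP (x : Q) : Equiv.Perm (IdealT Q) :=
  Function.Involutive.toPerm (fun s => ⟨tog x s.1, tog_ideal s.2⟩)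
    (fun s => Subtype.ext (tog_invol s.2))

theorem togP_apply (x : Q) (s : IdealT Q) : (togP x s).1 = tog x s.1 := rfl

/-- The permutation associated to a list of toggles (first element applied first). -/
def permOfL (L : List Q) : Equiv.Perm (IdealT Q) := (L.reverse.map togP).prod

theorem permOfL_nil : permOfL ([] : List Q) = 1 := rfl

theorem permOfL_cons (x : Q) (t : List Q) :
    permOfL (x :: t) = permOfL t * togP x := by
  unfold permOfL
  rw [List.reverse_cons, List.map_append, List.prod_append]
  simp

theorem permOfL_apply (L : List Q) (s : IdealT Q) :
    (permOfL L s).1 = togList L s.1 := by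
  induction L generalizing s with
  | nil => rfl
  | cons x t ih =>
    rw [permOfL_cons, togList_cons]
    have : (permOfL t * togP x) s = permOfL t (togP x s) := rfl
    rw [this, ih]
    rfl

theorem permOfL_append (L1 L2 : List Q) :
    permOfL (L1 ++ L2) = permOfL L2 * permOfL L1 := by
  unfold permOfL
  rw [List.reverse_append, List.map_append, List.prod_append]

/-- Concatenate a family of blocks. -/
def colsCat (f : ℕ → List Q) : List ℕ → List Q
  | [] => []
  | j :: t => f j ++ colsCat f t

theorem permOfL_colsCat (f : ℕ → List Q) (js : List ℕ) :
    permOfL (colsCat f js) = ((js.reverse.map (fun j => permOfL (f j)))).prod := by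
  induction js with
  | nil => rfl
  | cons j t ih =>
    show permOfL (f j ++ colsCat f t) = _
    rw [permOfL_append, ih, List.reverse_cons, List.map_append, List.prod_append]
    simp

theorem commute_permOfL {L1 L2 : List Q}
    (h : ∀ x ∈ L1, ∀ y ∈ L2, Commute (togP x) (togP y)) :
    Commute (permOfL L1) (permOfL L2) := by
  unfold permOfL
  refine Commute.list_prod_right _ _ (fun u hu => ?_)
  obtain ⟨y, hy, rfl⟩ := List.mem_map.1 hu
  refine Commute.symm (Commute.list_prod_right _ _ (fun v hv => ?_))
  obtain ⟨x, hx, rfl⟩ := List.mem_map.1 hv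
  exact (h x (List.mem_reverse.1 hx) y (List.mem_reverse.1 hy)).symm

end CFDF

namespace CFDF
/-- In a group, the ascending product of generators commuting at distance ≥ 2
is conjugate to the descending product. -/
theorem conj_rev {G : Type*} [Group G] (s : ℕ → G)
    (hc : ∀ i j, i + 2 ≤ j → Commute (s i) (s j)) (m : ℕ) :
    IsConj (((List.range m).map s).prod) (((List.range m).reverse.map s).prod) := by
  suffices h : ∀ k, k ≤ m → IsConj (((List.range m).map s).prod)
      ((((List.range k).reverse.map s).prod) * (((List.range' k (m - k)).map s).prod)) by
    have := h m (le_refl m)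
    simpa using this
  intro k hk
  induction k with
  | zero =>
    simp only [List.range_zero, List.reverse_nil, List.map_nil, List.prod_nil, one_mul,
      Nat.sub_zero, ← List.range_eq_range']
    exact IsConj.refl _
  | succ k ih =>
    refine (ih (le_of_lt hk)).trans ?_
    have hmk : m - k = (m - (k+1)) + 1 := by omega
    rw [hmk, List.range'_succ, List.map_cons, List.prod_cons]
    set D := ((List.range k).reverse.map s).prod with hD
    set T := ((List.range' (k+1) (m - (k+1))).map s).prod with hT
    have hcomm : Commute T D := by
      rw [hD, hT]
      refine Commute.list_prod_right _ _ (fun u hu => ?_)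
      obtain ⟨i, hi, rfl⟩ := List.mem_map.1 hu
      rw [List.mem_reverse, List.mem_range] at hi
      refine Commute.symm (Commute.list_prod_right _ _ (fun v hv => ?_))
      obtain ⟨j, hj, rfl⟩ := List.mem_map.1 hv
      rw [List.mem_range'] at hj
      obtain ⟨w, hw, rfl⟩ := hj
      exact hc i (k + 1 + 1 * w) (by omega)
    have key : IsConj (D * (s k * T)) (s k * (D * T)) := by
      rw [isConj_iff]
      refine ⟨s k * T, ?_⟩
      have e1 : (s k * T) * (D * (s k * T)) * (s k * T)⁻¹ = (s k * T) * D := by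
        rw [← mul_assoc, mul_inv_cancel_right]
      rw [e1, mul_assoc, hcomm.eq]
    have : ((List.range (k+1)).reverse.map s).prod = s k * D := by
      rw [List.range_succ, List.reverse_append, List.map_append, List.prod_append]
      simp [hD]
    rw [this, mul_assoc]
    exact key
end CFDF

namespace CFDF

variable {a b : ℕ}

abbrev PP (a b : ℕ) := Fin a × Fin b

/-- A valid height profile. -/
structure Good (a b : ℕ) (c : ℕ → ℕ) : Prop where
  anti : ∀ {i j : ℕ}, i ≤ j → c j ≤ c i
  bdd : ∀ j, c j ≤ a
  van : ∀ j, b ≤ j → c j = 0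

/-- The ideal with column heights `c`. -/
def ofHtsN (c : ℕ → ℕ) : Set (PP a b) := {x | (x.1 : ℕ) < c (x.2 : ℕ)}

theorem mem_ofHtsN {c : ℕ → ℕ} {x : PP a b} : x ∈ (ofHtsN c : Set (PP a b)) ↔ (x.1 : ℕ) < c (x.2 : ℕ) :=
  Iff.rfl

theorem ofHtsN_ideal {c : ℕ → ℕ} (hc : ∀ {i j : ℕ}, i ≤ j → c j ≤ c i) :
    IsOrderIdeal (ofHtsN c : Set (PP a b)) := by
  rintro x hx y hy
  have h1 : y.1 ≤ x.1 := hy.1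
  have h2 : y.2 ≤ x.2 := hy.2
  exact lt_of_le_of_lt (Nat.le_of_lt_succ (Nat.lt_succ_of_le h1))
    (lt_of_lt_of_le hx (hc h2))

/-- Column heights of a set. -/
def htsN (I : Set (PP a b)) : ℕ → ℕ := fun j =>
  if hj : j < b then (Finset.univ.filter (fun i : Fin a => ((i, ⟨j, hj⟩) : PP a b) ∈ I)).card
  else 0

theorem mem_iff_lt_card {S : Finset (Fin a)}
    (hS : ∀ {i i' : Fin a}, i' ≤ i → i ∈ S → i' ∈ S) (i : Fin a) :
    i ∈ S ↔ (i : ℕ) < S.card := by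
  constructor
  · intro hi
    have hsub : Finset.Iic i ⊆ S := fun k hk => hS (Finset.mem_Iic.1 hk) hi
    have := Finset.card_le_card hsub
    rw [Fin.card_Iic] at this
    omega
  · intro hlt
    by_contra hi
    have hsub : S ⊆ Finset.Iio i := by
      intro s hs
      rw [Finset.mem_Iio]
      by_contra hsi
      exact hi (hS (le_of_not_gt hsi) hs)
    have := Finset.card_le_card hsub
    rw [Fin.card_Iio] at this
    omega

theorem htsN_good {I : Set (PP a b)} (hI : IsOrderIdeal I) : Good a b (htsN I) := by
  refine ⟨?_, ?_, ?_⟩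
  · intro i j hij
    unfold htsN
    by_cases hj : j < b
    · have hi : i < b := lt_of_le_of_lt hij hj
      rw [dif_pos hj, dif_pos hi]
      refine Finset.card_le_card (fun k hk => ?_)
      simp only [Finset.mem_filter, Finset.mem_univ, true_and] at hk ⊢
      exact hI hk (by
        refine ⟨le_refl _, ?_⟩
        show (⟨i, hi⟩ : Fin b) ≤ ⟨j, hj⟩
        exact hij)
    · rw [dif_neg hj]; omega
  · intro j
    unfold htsN
    by_cases hj : j < b
    · rw [dif_pos hj]
      calc (Finset.univ.filter _).card ≤ (Finset.univ : Finset (Fin a)).card :=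
            Finset.card_le_card (Finset.filter_subset _ _)
        _ = a := by simp
    · rw [dif_neg hj]; omega
  · intro j hj
    unfold htsN
    rw [dif_neg (by omega)]

theorem ofHtsN_htsN {I : Set (PP a b)} (hI : IsOrderIdeal I) : (ofHtsN (htsN I) : Set (PP a b)) = I := by
  ext ⟨i, j⟩
  rw [mem_ofHtsN]
  unfold htsN
  rw [dif_pos j.isLt]
  have hj : (⟨(j : ℕ), j.isLt⟩ : Fin b) = j := rfl
  rw [hj]
  have key := mem_iff_lt_card
    (S := Finset.univ.filter (fun i : Fin a => ((i, j) : PP a b) ∈ I))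
    (fun {u u'} hle hu => by
      simp only [Finset.mem_filter, Finset.mem_univ, true_and] at hu ⊢
      exact hI hu ⟨hle, le_refl _⟩) i
  simp only [Finset.mem_filter, Finset.mem_univ, true_and] at key
  exact key.symm

theorem filter_val_lt_card {m : ℕ} (hm : m ≤ a) :
    (Finset.univ.filter (fun i : Fin a => (i : ℕ) < m)).card = m := by
  have himg : Finset.image Fin.val (Finset.univ.filter (fun i : Fin a => (i : ℕ) < m))
      = Finset.range m := by
    ext k
    simp only [Finset.mem_image, Finset.mem_filter, Finset.mem_univ, true_and, Finset.mem_range]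
    constructor
    · rintro ⟨i, hi, rfl⟩; exact hi
    · intro hk; exact ⟨⟨k, lt_of_lt_of_le hk hm⟩, hk, rfl⟩
  have := Finset.card_image_of_injective
    (Finset.univ.filter (fun i : Fin a => (i : ℕ) < m)) Fin.val_injective
  rw [himg, Finset.card_range] at this
  omega

theorem htsN_ofHtsN {c : ℕ → ℕ} (hg : Good a b c) : htsN (ofHtsN c : Set (PP a b)) = c := by
  funext j
  unfold htsN
  by_cases hj : j < b
  · rw [dif_pos hj]
    have heq : (Finset.univ.filter (fun i : Fin a => ((i, ⟨j, hj⟩) : PP a b) ∈ (ofHtsN c : Set (PP a b))))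
        = Finset.univ.filter (fun i : Fin a => (i : ℕ) < c j) := by
      ext k
      simp [mem_ofHtsN]
    rw [heq]
    exact filter_val_lt_card (hg.bdd j)
  · rw [dif_neg hj, (hg.van j (by omega)).symm]


def LvN (a : ℕ) (c : ℕ → ℕ) (j : ℕ) : ℕ := if j = 0 then a else c (j - 1)

theorem mk_lt_mk {a b : ℕ} {i1 i2 j1 j2 : ℕ} (h1 : i1 < a) (h2 : i2 < a) (h3 : j1 < b)
    (h4 : j2 < b) (hle1 : i1 ≤ i2) (hle2 : j1 ≤ j2) (hne : ¬ (i1 = i2 ∧ j1 = j2)) :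
    ((⟨i1, h1⟩, ⟨j1, h3⟩) : PP a b) < (⟨i2, h2⟩, ⟨j2, h4⟩) := by
  rw [lt_iff_le_and_ne]
  refine ⟨⟨hle1, hle2⟩, fun heq => ?_⟩
  rw [Prod.ext_iff, Fin.ext_iff, Fin.ext_iff] at heq
  exact hne heq

theorem exists_above_iff {c : ℕ → ℕ} (hg : Good a b c) {i j : ℕ} (hi : i < a) (hj : j < b) :
    (∃ z : PP a b, ((⟨i, hi⟩, ⟨j, hj⟩) : PP a b) < z ∧ z ∈ (ofHtsN c : Set (PP a b)))
      ↔ (i + 1 < c j ∨ i < c (j + 1)) := by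
  constructor
  · rintro ⟨z, hlt, hz⟩
    have hle := hlt.le
    have h1 : i ≤ (z.1 : ℕ) := hle.1
    have h2 : j ≤ (z.2 : ℕ) := hle.2
    rw [mem_ofHtsN] at hz
    by_cases hz2 : (z.2 : ℕ) = j
    · left
      have hne1 : (z.1 : ℕ) ≠ i := by
        intro h
        exact hlt.ne' (Prod.ext (Fin.ext h) (Fin.ext hz2))
      rw [hz2] at hz
      omega
    · right
      have : j + 1 ≤ (z.2 : ℕ) := by omega
      have := hg.anti this
      omega
  · rintro (h | h)
    · have hi1 : i + 1 < a := lt_of_lt_of_le h (hg.bdd j)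
      refine ⟨(⟨i + 1, hi1⟩, ⟨j, hj⟩), ?_, ?_⟩
      · exact mk_lt_mk hi hi1 hj hj (by omega) (le_refl _) (by omega)
      · rw [mem_ofHtsN]; exact h
    · have hj1 : j + 1 < b := by
        by_contra hb'
        rw [hg.van (j+1) (by omega)] at h
        omega
      refine ⟨(⟨i, hi⟩, ⟨j + 1, hj1⟩), ?_, ?_⟩
      · exact mk_lt_mk hi hi hj hj1 (le_refl _) (by omega) (by omega)
      · rw [mem_ofHtsN]; exact h

theorem below_iff {c : ℕ → ℕ} (hg : Good a b c) {i j : ℕ} (hi : i < a) (hj : j < b) :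
    (∀ y : PP a b, y < ((⟨i, hi⟩, ⟨j, hj⟩) : PP a b) → y ∈ (ofHtsN c : Set (PP a b)))
      ↔ (i ≤ c j ∧ i < LvN a c j) := by
  constructor
  · intro hall
    constructor
    · rcases Nat.eq_zero_or_pos i with rfl | hpos
      · exact Nat.zero_le _
      · have hk : i - 1 < a := by omega
        have hy : ((⟨i - 1, hk⟩, ⟨j, hj⟩) : PP a b) < (⟨i, hi⟩, ⟨j, hj⟩) :=
          mk_lt_mk hk hi hj hj (by omega) (le_refl _) (by omega)
        have := hall _ hy
        rw [mem_ofHtsN] at this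
        simp at this
        omega
    · unfold LvN
      split_ifs with hj0
      · exact hi
      · have hk : j - 1 < b := by omega
        have hy : ((⟨i, hi⟩, ⟨j - 1, hk⟩) : PP a b) < (⟨i, hi⟩, ⟨j, hj⟩) :=
          mk_lt_mk hi hi hk hj (le_refl _) (by omega) (by omega)
        have := hall _ hy
        rw [mem_ofHtsN] at this
        simpa using this
  · rintro ⟨h1, h2⟩ y hy
    have hle := hy.le
    have hy1 : (y.1 : ℕ) ≤ i := hle.1
    have hy2 : (y.2 : ℕ) ≤ j := hle.2
    rw [mem_ofHtsN]
    by_cases hcol : (y.2 : ℕ) = j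
    · have hne : (y.1 : ℕ) ≠ i := by
        intro h
        refine hy.ne (Prod.ext (Fin.ext ?_) (Fin.ext ?_)) <;> simp [h, hcol]
      rw [hcol]
      omega
    · have hj0 : j ≠ 0 := by omega
      unfold LvN at h2
      rw [if_neg hj0] at h2
      have : c (j - 1) ≤ c (y.2 : ℕ) := hg.anti (by omega)
      omega

theorem mem_cell_iff {c : ℕ → ℕ} {i j : ℕ} (hi : i < a) (hj : j < b) :
    ((⟨i, hi⟩, ⟨j, hj⟩) : PP a b) ∈ (ofHtsN c : Set (PP a b)) ↔ i < c j := Iff.rfl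

/-- T2: the cell is in the ideal and blocked from leaving. -/
theorem tog_frozen_in {c : ℕ → ℕ} (hg : Good a b c) {i j : ℕ} (hi : i < a) (hj : j < b)
    (hx : i < c j) (hup : i + 1 < c j ∨ i < c (j + 1)) :
    tog ((⟨i, hi⟩, ⟨j, hj⟩) : PP a b) (ofHtsN c) = ofHtsN c := by
  unfold tog
  rw [if_pos ((mem_cell_iff hi hj).2 hx), if_neg]
  intro hall
  obtain ⟨z, hz1, hz2⟩ := (exists_above_iff hg hi hj).2 hup
  exact (hall z hz1) hz2

/-- T4: the cell is out of the ideal and blocked from entering. -/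
theorem tog_frozen_out {c : ℕ → ℕ} (hg : Good a b c) {i j : ℕ} (hi : i < a) (hj : j < b)
    (hx : c j ≤ i) (hblk : c j < i ∨ ¬ i < LvN a c j) :
    tog ((⟨i, hi⟩, ⟨j, hj⟩) : PP a b) (ofHtsN c) = ofHtsN c := by
  unfold tog
  rw [if_neg (by rw [mem_cell_iff hi hj]; omega), if_neg]
  intro hall
  have := (below_iff hg hi hj).1 hall
  rcases hblk with h | h
  · omega
  · exact h this.2

/-- T1: removal of the top cell of the column. -/
theorem tog_remove {c : ℕ → ℕ} (hg : Good a b c) {i j : ℕ} (hi : i < a) (hj : j < b)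
    (hx : c j = i + 1) (hup : c (j + 1) ≤ i) :
    tog ((⟨i, hi⟩, ⟨j, hj⟩) : PP a b) (ofHtsN c) = ofHtsN (Function.update c j i) := by
  unfold tog
  rw [if_pos ((mem_cell_iff hi hj).2 (by omega))]
  rw [if_pos]
  · ext y
    simp only [Set.mem_diff, Set.mem_singleton_iff, mem_ofHtsN, Function.update_apply]
    by_cases hcol : (y.2 : ℕ) = j
    · rw [if_pos hcol, hcol]
      constructor
      · rintro ⟨hmem, hne⟩
        have : (y.1 : ℕ) ≠ i := by
          intro h
          exact hne (Prod.ext (Fin.ext (by simp [h])) (Fin.ext (by simp [hcol])))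
        omega
      · intro h
        constructor
        · omega
        · intro heq
          have := congrArg (fun p : PP a b => (p.1 : ℕ)) heq
          simp at this
          omega
    · rw [if_neg hcol]
      constructor
      · rintro ⟨hmem, _⟩; exact hmem
      · intro h
        refine ⟨h, fun heq => hcol ?_⟩
        have := congrArg (fun p : PP a b => (p.2 : ℕ)) heq
        simpa using this
  · intro z hz
    intro hzmem
    have : ∃ z : PP a b, ((⟨i, hi⟩, ⟨j, hj⟩) : PP a b) < z ∧ z ∈ (ofHtsN c : Set (PP a b)) :=
      ⟨z, hz, hzmem⟩
    rw [exists_above_iff hg hi hj] at this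
    omega

/-- T3: insertion of a cell on top of the column. -/
theorem tog_insert {c : ℕ → ℕ} (hg : Good a b c) {i j : ℕ} (hi : i < a) (hj : j < b)
    (hx : c j = i) (hL : i < LvN a c j) :
    tog ((⟨i, hi⟩, ⟨j, hj⟩) : PP a b) (ofHtsN c) = ofHtsN (Function.update c j (i + 1)) := by
  unfold tog
  rw [if_neg (by rw [mem_cell_iff hi hj]; omega)]
  rw [if_pos ((below_iff hg hi hj).2 ⟨by omega, hL⟩)]
  ext y
  simp only [Set.mem_insert_iff, mem_ofHtsN, Function.update_apply]
  by_cases hcol : (y.2 : ℕ) = j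
  · rw [if_pos hcol]
    constructor
    · rintro (rfl | hmem)
      · simp
      · rw [hcol] at hmem; omega
    · intro h
      rcases Nat.lt_or_ge (y.1 : ℕ) i with h' | h'
      · right; rw [hcol]; omega
      · left
        have : (y.1 : ℕ) = i := by omega
        exact Prod.ext (Fin.ext (by simpa using this)) (Fin.ext (by simpa using hcol))
  · rw [if_neg hcol]
    constructor
    · rintro (rfl | hmem)
      · simp at hcol
      · exact hmem
    · exact fun h => Or.inr h


/-- The intermediate height of column `j` after the cells with row index `≥ r` have
been toggled (top-down). -/
def Vv (a : ℕ) (c : ℕ → ℕ) (j r : ℕ) : ℕ :=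
  if c j < LvN a c j then (if r ≤ c j then c j + 1 else c j)
  else min (c j) (max r (c (j + 1)))

theorem h_le_LvN {c : ℕ → ℕ} (hg : Good a b c) (j : ℕ) : c j ≤ LvN a c j := by
  unfold LvN
  split_ifs with h0
  · exact hg.bdd j
  · exact hg.anti (by omega)

theorem LvN_le_a {c : ℕ → ℕ} (hg : Good a b c) (j : ℕ) : LvN a c j ≤ a := by
  unfold LvN
  split_ifs with h0
  · exact le_refl _
  · exact hg.bdd _

theorem R_le_h {c : ℕ → ℕ} (hg : Good a b c) (j : ℕ) : c (j + 1) ≤ c j :=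
  hg.anti (by omega)

theorem Vv_bounds {c : ℕ → ℕ} (hg : Good a b c) (j r : ℕ) :
    c (j + 1) ≤ Vv a c j r ∧ Vv a c j r ≤ LvN a c j := by
  have hR := R_le_h hg j
  have hL := h_le_LvN hg j
  unfold Vv
  split_ifs with h1 h2 <;> constructor <;> omega

theorem Vv_top {c : ℕ → ℕ} (hg : Good a b c) (j : ℕ) : Vv a c j a = c j := by
  have hR := R_le_h hg j
  have hL := h_le_LvN hg j
  have hLa := LvN_le_a hg j
  have hb1 := hg.bdd (j + 1)
  have hb0 := hg.bdd j
  unfold Vv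
  split_ifs with h1 h2 <;> omega

theorem Vv_zero {c : ℕ → ℕ} (hg : Good a b c) (j : ℕ) :
    Vv a c j 0 = if c j < LvN a c j then c j + 1 else c (j + 1) := by
  have hR := R_le_h hg j
  unfold Vv
  split_ifs with h1 <;> omega

theorem good_update {c : ℕ → ℕ} (hg : Good a b c) {j : ℕ} (hj : j < b) {v : ℕ}
    (hv1 : c (j + 1) ≤ v) (hv2 : v ≤ LvN a c j) : Good a b (Function.update c j v) := by
  refine ⟨?_, ?_, ?_⟩
  · intro p q hpq
    rw [Function.update_apply, Function.update_apply]
    split_ifs with h1 h2 h2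
    · exact le_refl _
    · -- q = j, p ≠ j, p ≤ q : v ≤ c p
      have hj0 : j ≠ 0 := by omega
      have hle : c (j - 1) ≤ c p := hg.anti (by omega)
      unfold LvN at hv2
      rw [if_neg hj0] at hv2
      omega
    · -- p = j, q ≠ j, q ≥ j : c q ≤ v
      have hle : c q ≤ c (j + 1) := hg.anti (by omega)
      omega
    · exact hg.anti hpq
  · intro k
    rw [Function.update_apply]
    split_ifs with h1
    · exact le_trans hv2 (LvN_le_a hg _)
    · exact hg.bdd k
  · intro k hk
    rw [Function.update_apply, if_neg (by omega)]
    exact hg.van k hk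

theorem good_update_Vv {c : ℕ → ℕ} (hg : Good a b c) {j : ℕ} (hj : j < b) (r : ℕ) :
    Good a b (Function.update c j (Vv a c j r)) :=
  good_update hg hj (Vv_bounds hg j r).1 (Vv_bounds hg j r).2

theorem Vv_step {c : ℕ → ℕ} (hg : Good a b c) {i j : ℕ} (hi : i < a) (hj : j < b) :
    tog ((⟨i, hi⟩, ⟨j, hj⟩) : PP a b) (ofHtsN (Function.update c j (Vv a c j (i + 1))))
      = ofHtsN (Function.update c j (Vv a c j i)) := by
  have hR : c (j + 1) ≤ c j := R_le_h hg j
  have hL : c j ≤ LvN a c j := h_le_LvN hg j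
  have hLa : LvN a c j ≤ a := LvN_le_a hg j
  have hg1 : Good a b (Function.update c j (Vv a c j (i + 1))) := good_update_Vv hg hj (i + 1)
  have hc1j : Function.update c j (Vv a c j (i + 1)) j = Vv a c j (i + 1) :=
    Function.update_self _ _ _
  have hc1R : Function.update c j (Vv a c j (i + 1)) (j + 1) = c (j + 1) :=
    Function.update_of_ne (by omega) _ _
  have hc1L : LvN a (Function.update c j (Vv a c j (i + 1))) j = LvN a c j := by
    unfold LvN
    split_ifs with h0
    · rfl
    · exact Function.update_of_ne (by omega) _ _
  have hupd : ∀ v : ℕ, Function.update (Function.update c j (Vv a c j (i + 1))) j v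
      = Function.update c j v := fun v => by rw [Function.update_idem]
  rcases lt_or_eq_of_le hL with hcase | hcase
  · -- Case 1 : c j < LvN a c j
    have hV : ∀ r, Vv a c j r = if r ≤ c j then c j + 1 else c j := by
      intro r; unfold Vv; rw [if_pos (by omega)]
    rcases lt_trichotomy i (c j) with hih | hih | hih
    · -- i < c j : frozen in
      have e1 : Vv a c j (i + 1) = c j + 1 := by rw [hV]; first | (split_ifs <;> omega) | omega
      have e2 : Vv a c j i = c j + 1 := by rw [hV]; first | (split_ifs <;> omega) | omega
      rw [tog_frozen_in hg1 hi hj (by rw [hc1j, e1]; omega)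
        (Or.inl (by rw [hc1j, e1]; omega)), e2, ← e1]
    · -- i = c j : insert
      have e1 : Vv a c j (i + 1) = c j := by rw [hV]; first | (split_ifs <;> omega) | omega
      have e2 : Vv a c j i = c j + 1 := by rw [hV]; first | (split_ifs <;> omega) | omega
      rw [tog_insert hg1 hi hj (by rw [hc1j, e1]; omega) (by rw [hc1L]; omega), hupd, e2]
      rw [← hih]
    · -- i > c j : frozen out
      have e1 : Vv a c j (i + 1) = c j := by rw [hV]; first | (split_ifs <;> omega) | omega
      have e2 : Vv a c j i = c j := by rw [hV]; first | (split_ifs <;> omega) | omega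
      rw [tog_frozen_out hg1 hi hj (by rw [hc1j, e1]; omega)
        (Or.inl (by rw [hc1j, e1]; omega)), e2, ← e1]
  · -- Case 2 : c j = LvN a c j
    have hV : ∀ r, Vv a c j r = min (c j) (max r (c (j + 1))) := by
      intro r; unfold Vv; rw [if_neg (by omega)]
    rcases le_or_gt (c j) i with hih | hih
    · -- i ≥ c j : frozen out
      have e1 : Vv a c j (i + 1) = c j := by rw [hV]; first | (split_ifs <;> omega) | omega
      have e2 : Vv a c j i = c j := by rw [hV]; first | (split_ifs <;> omega) | omega
      refine Eq.trans (tog_frozen_out hg1 hi hj (by rw [hc1j, e1]; omega) ?_) (by rw [e2, ← e1])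
      rcases lt_or_eq_of_le hih with h' | h'
      · exact Or.inl (by rw [hc1j, e1]; omega)
      · exact Or.inr (by rw [hc1L]; omega)
    · rcases le_or_gt (c (j + 1)) i with hRi | hRi
      · -- c (j+1) ≤ i < c j : remove
        have e1 : Vv a c j (i + 1) = i + 1 := by rw [hV]; first | (split_ifs <;> omega) | omega
        have e2 : Vv a c j i = i := by rw [hV]; first | (split_ifs <;> omega) | omega
        rw [tog_remove hg1 hi hj (by rw [hc1j, e1]) (by rw [hc1R]; omega), hupd, e2]
      · -- i < c (j+1) : frozen in
        have e1 : Vv a c j (i + 1) = c (j + 1) := by rw [hV]; first | (split_ifs <;> omega) | omega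
        have e2 : Vv a c j i = c (j + 1) := by rw [hV]; first | (split_ifs <;> omega) | omega
        rw [tog_frozen_in hg1 hi hj (by rw [hc1j, e1]; omega)
          (Or.inr (by rw [hc1R]; omega)), e2, ← e1]

/-- The cell in row `i` (0-based, junk values wrap) of column `j`. -/
def cellF (ha : 0 < a) {j : ℕ} (hj : j < b) (i : ℕ) : PP a b :=
  (⟨i % a, Nat.mod_lt _ ha⟩, ⟨j, hj⟩)

theorem cellF_eq (ha : 0 < a) {j : ℕ} (hj : j < b) {i : ℕ} (hi : i < a) :
    cellF ha hj i = ((⟨i, hi⟩, ⟨j, hj⟩) : PP a b) := by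
  unfold cellF
  exact Prod.ext (Fin.ext (Nat.mod_eq_of_lt hi)) rfl

theorem cascade (ha : 0 < a) {c : ℕ → ℕ} (hg : Good a b c) {j : ℕ} (hj : j < b) :
    ∀ d r, r + d = a →
      togList (((List.range' r d).reverse).map (cellF ha hj))
          (ofHtsN (Function.update c j (Vv a c j (r + d))))
        = ofHtsN (Function.update c j (Vv a c j r)) := by
  intro d
  induction d with
  | zero =>
    intro r hr
    simp [togList_nil]
  | succ d ih =>
    intro r hr
    have hr1 : (r + 1) + d = a := by omega
    have hra : r < a := by omega
    rw [List.range'_succ, List.reverse_cons, List.map_append, togList_append]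
    have : r + (d + 1) = (r + 1) + d := by omega
    rw [this, ih (r + 1) hr1]
    simp only [List.map_cons, List.map_nil]
    rw [togList_cons, togList_nil, cellF_eq ha hj hra]
    exact Vv_step hg hra hj

/-- The list of cells of column `j`, from top to bottom. -/
def colListN (ha : 0 < a) (j : ℕ) : List (PP a b) :=
  if hj : j < b then ((List.range a).reverse).map (cellF ha hj) else []

theorem col_apply (ha : 0 < a) {c : ℕ → ℕ} (hg : Good a b c) {j : ℕ} (hj : j < b) :
    togList (colListN (a := a) (b := b) ha j) (ofHtsN c)
      = ofHtsN (Function.update c j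
          (if c j < LvN a c j then c j + 1 else c (j + 1))) := by
  unfold colListN
  rw [dif_pos hj, List.range_eq_range']
  have h0 : (0 : ℕ) + a = a := by omega
  have := cascade ha hg hj a 0 h0
  rw [h0, Vv_top hg, Function.update_eq_self, Vv_zero hg] at this
  exact this


theorem colsCat_append {α : Type*} [PartialOrder α] (f : ℕ → List α) (l1 l2 : List ℕ) :
    colsCat f (l1 ++ l2) = colsCat f l1 ++ colsCat f l2 := by
  induction l1 with
  | nil => rfl
  | cons j t ih =>
    show f j ++ colsCat f (t ++ l2) = (f j ++ colsCat f t) ++ colsCat f l2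
    rw [ih, List.append_assoc]

/-- One full promotion step on height profiles. -/
def PiH (a b : ℕ) (c : ℕ → ℕ) : ℕ → ℕ :=
  if c 0 < a then (fun j => if j < b then c j + 1 else 0) else (fun j => c (j + 1))

def partialH (a : ℕ) (c : ℕ → ℕ) (m : ℕ) : ℕ → ℕ :=
  fun j => if j < m then (if c 0 < a then c j + 1 else c (j + 1)) else c j

theorem good_partialH {c : ℕ → ℕ} (hg : Good a b c) {m : ℕ} (hm : m ≤ b) :
    Good a b (partialH a c m) := by
  refine ⟨?_, ?_, ?_⟩
  · intro p q hpq
    have ha1 := hg.anti hpq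
    have ha2 := hg.anti (show p + 1 ≤ q + 1 by omega)
    rcases le_or_gt (p + 1) q with h5 | h5
    · have ha3 := hg.anti h5
      unfold partialH
      split_ifs <;> omega
    · have hpq' : p = q := by omega
      subst hpq'
      unfold partialH
      split_ifs <;> omega
  · intro k
    have h0 := hg.anti (Nat.zero_le k)
    have h1 := hg.bdd (k + 1)
    have h2 := hg.bdd k
    have h3 := hg.bdd 0
    unfold partialH
    split_ifs <;> omega
  · intro k hk
    unfold partialH
    rw [if_neg (by omega)]
    exact hg.van k hk

theorem partialH_zero (a : ℕ) (c : ℕ → ℕ) : partialH a c 0 = c := by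
  funext j; unfold partialH; rw [if_neg (by omega)]

theorem partialH_full {c : ℕ → ℕ} (hg : Good a b c) : partialH a c b = PiH a b c := by
  funext j
  have hPi : PiH a b c j = if c 0 < a then (if j < b then c j + 1 else 0) else c (j + 1) := by
    unfold PiH; split_ifs <;> simp_all
  rw [hPi]
  unfold partialH
  by_cases hc : c 0 < a <;> by_cases hj : j < b
  · rw [if_pos hj, if_pos hc, if_pos hc, if_pos hj]
  · rw [if_neg hj, if_pos hc, if_neg hj, hg.van j (by omega)]
  · rw [if_pos hj, if_neg hc, if_neg hc]
  · rw [if_neg hj, if_neg hc, hg.van j (by omega), hg.van (j + 1) (by omega)]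

theorem pi_cols (ha : 0 < a) {c : ℕ → ℕ} (hg : Good a b c) :
    ∀ m, m ≤ b →
      togList (colsCat (colListN (a := a) (b := b) ha) (List.range m)) (ofHtsN c)
        = ofHtsN (partialH a c m) := by
  intro m
  induction m with
  | zero =>
    intro _
    rw [List.range_zero, partialH_zero]
    rfl
  | succ m ih =>
    intro hm
    have hmb : m < b := by omega
    rw [List.range_succ, colsCat_append, togList_append, ih (by omega)]
    show togList (colListN ha m ++ colsCat _ []) _ = _
    rw [show colsCat (colListN (a := a) (b := b) ha) [] = [] from rfl, List.append_nil]
    rw [col_apply ha (good_partialH hg (by omega)) hmb]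
    have hmm : partialH a c m m = c m := by unfold partialH; rw [if_neg (by omega)]
    have hmm1 : partialH a c m (m + 1) = c (m + 1) := by
      unfold partialH; rw [if_neg (by omega)]
    have hLv : LvN a (partialH a c m) m
        = if m = 0 then a else (if c 0 < a then c (m - 1) + 1 else c m) := by
      by_cases h0 : m = 0
      · unfold LvN; rw [if_pos h0, if_pos h0]
      · unfold LvN
        rw [if_neg h0, if_neg h0]
        unfold partialH
        rw [if_pos (show m - 1 < m by omega), show m - 1 + 1 = m by omega]
    have hfun : Function.update (partialH a c m) m
        (if partialH a c m m < LvN a (partialH a c m) m then partialH a c m m + 1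
          else partialH a c m (m + 1)) = partialH a c (m + 1) := by
      funext k
      rw [Function.update_apply]
      by_cases hk : k = m
      · subst hk
        rw [if_pos rfl, hmm, hmm1, hLv]
        have hP : partialH a c (k + 1) k = if c 0 < a then c k + 1 else c (k + 1) := by
          unfold partialH; rw [if_pos (by omega)]
        rw [hP]
        have hanti : c k ≤ c (k - 1) := hg.anti (by omega)
        rcases eq_or_ne k 0 with rfl | h0
        · split_ifs <;> omega
        · split_ifs <;> omega
      · rw [if_neg hk]
        unfold partialH
        by_cases hkm : k < m
        · rw [if_pos hkm, if_pos (show k < m + 1 by omega)]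
        · rw [if_neg hkm, if_neg (show ¬ k < m + 1 by omega)]
    rw [hfun]


theorem mem_colsCat {f : ℕ → List (PP a b)} {js : List ℕ} {x : PP a b} :
    x ∈ colsCat f js ↔ ∃ j ∈ js, x ∈ f j := by
  induction js with
  | nil => simp [colsCat]
  | cons j t ih =>
    show x ∈ f j ++ colsCat f t ↔ _
    simp [ih, List.mem_append]

theorem mem_colListN {ha : 0 < a} {j : ℕ} {x : PP a b} :
    x ∈ colListN (a := a) (b := b) ha j ↔ (j < b ∧ (x.2 : ℕ) = j) := by
  unfold colListN
  split_ifs with hj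
  · simp only [List.mem_map, List.mem_reverse, List.mem_range]
    constructor
    · rintro ⟨i, hi, rfl⟩
      exact ⟨hj, rfl⟩
    · rintro ⟨-, hx⟩
      refine ⟨(x.1 : ℕ), x.1.isLt, ?_⟩
      rw [cellF_eq ha hj x.1.isLt]
      exact Prod.ext rfl (Fin.ext hx.symm)
  · simp [hj]

def fullRTL (ha : 0 < a) : List (PP a b) := colsCat (colListN ha) ((List.range b).reverse)

theorem mem_fullRTL (ha : 0 < a) (x : PP a b) : x ∈ fullRTL (a := a) (b := b) ha := by
  rw [fullRTL, mem_colsCat]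
  exact ⟨(x.2 : ℕ), by simp [x.2.isLt], mem_colListN.2 ⟨x.2.isLt, rfl⟩⟩

theorem nodup_colListN (ha : 0 < a) (j : ℕ) : (colListN (a := a) (b := b) ha j).Nodup := by
  unfold colListN
  split_ifs with hj
  · refine List.Nodup.map_on ?_ (List.nodup_reverse.2 (List.nodup_range))
    intro i hi i' hi' heq
    rw [List.mem_reverse, List.mem_range] at hi hi'
    have := congrArg (fun p : PP a b => (p.1 : ℕ)) heq
    simpa [cellF, Nat.mod_eq_of_lt hi, Nat.mod_eq_of_lt hi'] using this
  · exact List.nodup_nil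

theorem nodup_fullRTL (ha : 0 < a) : (fullRTL (a := a) (b := b) ha).Nodup := by
  have key : ∀ js : List ℕ, js.Nodup → (colsCat (colListN (a := a) (b := b) ha) js).Nodup := by
    intro js
    induction js with
    | nil => intro _; exact List.nodup_nil
    | cons j t ih =>
      intro hnd
      show (colListN ha j ++ colsCat _ t).Nodup
      refine List.Nodup.append (nodup_colListN ha j) (ih (List.nodup_cons.1 hnd).2) ?_
      intro x hx1 hx2
      obtain ⟨hjb, hx⟩ := mem_colListN.1 hx1
      obtain ⟨j', hj't, hxj'⟩ := mem_colsCat.1 hx2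
      obtain ⟨hj'b, hx'⟩ := mem_colListN.1 hxj'
      exact (List.nodup_cons.1 hnd).1 (by rw [show j = j' by omega]; exact hj't)
  exact key _ (List.nodup_reverse.2 (List.nodup_range))

theorem pairwise_colListN (ha : 0 < a) (j : ℕ) :
    (colListN (a := a) (b := b) ha j).Pairwise (fun u v => ¬ u < v) := by
  unfold colListN
  split_ifs with hj
  · rw [List.pairwise_map]
    have h1 : ((List.range a).reverse).Pairwise (fun u v => v < u) := by
      rw [List.pairwise_reverse]
      exact List.pairwise_lt_range
    refine List.Pairwise.imp_of_mem ?_ h1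
    intro u v hu hv huv hlt
    rw [List.mem_reverse, List.mem_range] at hu hv
    have hle : (cellF (a := a) (b := b) ha hj u).1 ≤ (cellF ha hj v).1 := hlt.le.1
    rw [Fin.le_def] at hle
    simp only [cellF] at hle
    rw [Nat.mod_eq_of_lt hu, Nat.mod_eq_of_lt hv] at hle
    omega
  · exact List.Pairwise.nil

theorem pairwise_fullRTL (ha : 0 < a) :
    (fullRTL (a := a) (b := b) ha).Pairwise (fun u v => ¬ u < v) := by
  have key : ∀ js : List ℕ, js.Pairwise (· > ·) →
      (colsCat (colListN (a := a) (b := b) ha) js).Pairwise (fun u v => ¬ u < v) := by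
    intro js
    induction js with
    | nil => intro _; exact List.Pairwise.nil
    | cons j t ih =>
      intro hp
      show (colListN ha j ++ colsCat _ t).Pairwise _
      rw [List.pairwise_append]
      refine ⟨pairwise_colListN ha j, ih (List.Pairwise.of_cons hp), ?_⟩
      intro u hu v hv hlt
      obtain ⟨hjb, hu2⟩ := mem_colListN.1 hu
      obtain ⟨j', hj't, hv'⟩ := mem_colsCat.1 hv
      obtain ⟨hj'b, hv2⟩ := mem_colListN.1 hv'
      have hgt : j > j' := List.rel_of_pairwise_cons hp hj't
      have hle : (u.2 : ℕ) ≤ (v.2 : ℕ) := hlt.le.2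
      omega
  apply key
  rw [List.pairwise_reverse]
  exact List.pairwise_lt_range

theorem rho_correct (ha : 0 < a) {I : Set (PP a b)} (hI : IsOrderIdeal I) :
    togList (fullRTL (a := a) (b := b) ha) I = combRow I := by
  refine togList_correct hI _ I hI (nodup_fullRTL ha) (pairwise_fullRTL ha) ?_ ?_ ?_
  · intro u _ v _
    exact mem_fullRTL ha v
  · intro x hx
    exact absurd (mem_fullRTL ha x) hx
  · intro x _
    exact Iff.rfl

/-- The column-toggle permutation. -/
def AP (ha : 0 < a) (j : ℕ) : Equiv.Perm (IdealT (PP a b)) := permOfL (colListN ha j)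

theorem rho_perm_eq (ha : 0 < a) :
    permOfL (fullRTL (a := a) (b := b) ha)
      = ((List.range b).map (AP (a := a) (b := b) ha)).prod := by
  rw [fullRTL, permOfL_colsCat, List.reverse_reverse]
  rfl

theorem pi_perm_eq (ha : 0 < a) :
    permOfL (colsCat (colListN (a := a) (b := b) ha) (List.range b))
      = ((List.range b).reverse.map (AP (a := a) (b := b) ha)).prod := by
  rw [permOfL_colsCat]
  rfl

theorem AP_commute (ha : 0 < a) :
    ∀ i j, i + 2 ≤ j → Commute (AP (a := a) (b := b) ha i) (AP ha j) := by
  intro i j hij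
  by_cases hjb : j < b
  · refine commute_permOfL ?_
    intro x hx y hy
    obtain ⟨-, hx2⟩ := mem_colListN.1 hx
    obtain ⟨-, hy2⟩ := mem_colListN.1 hy
    refine Equiv.ext fun s => Subtype.ext ?_
    show tog x (tog y s.1) = tog y (tog x s.1)
    by_cases hxy : x ≤ y
    · have hlt : x < y := lt_of_le_of_ne hxy (by
        intro h
        rw [h] at hx2
        omega)
      have hz2 : (x.2 : ℕ) + 1 < b := by omega
      refine tog_comm_between s.2 hlt (z := (x.1, ⟨(x.2 : ℕ) + 1, hz2⟩)) ?_ ?_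
      · rw [lt_iff_le_and_ne]
        constructor
        · exact ⟨le_refl _, by rw [Fin.le_def]; simp⟩
        · intro h
          have := congrArg (fun p : PP a b => (p.2 : ℕ)) h
          simp at this
      · rw [lt_iff_le_and_ne]
        constructor
        · exact ⟨hxy.1, by rw [Fin.le_def]; simp; omega⟩
        · intro h
          have := congrArg (fun p : PP a b => (p.2 : ℕ)) h
          simp at this
          omega
    · have hyx : ¬ y ≤ x := by
        intro h
        have h2 := h.2
        rw [Fin.le_def] at h2
        omega
      exact tog_comm_incomp hxy hyx s.1
  · have hnil : colListN (a := a) (b := b) ha j = [] := by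
      unfold colListN; rw [dif_neg hjb]
    unfold AP
    rw [hnil, permOfL_nil]
    exact Commute.one_right _

theorem rho_pi_conj (ha : 0 < a) :
    IsConj (permOfL (fullRTL (a := a) (b := b) ha))
      (permOfL (colsCat (colListN (a := a) (b := b) ha) (List.range b))) := by
  rw [rho_perm_eq, pi_perm_eq]
  exact conj_rev _ (AP_commute ha) b


theorem good_PiH {c : ℕ → ℕ} (hg : Good a b c) : Good a b (PiH a b c) := by
  unfold PiH
  split_ifs with hc
  · refine ⟨?_, ?_, ?_⟩
    · intro p q hpq
      have h1 := hg.anti hpq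
      have h0q := hg.anti (Nat.zero_le q)
      have h0p := hg.anti (Nat.zero_le p)
      split_ifs <;> omega
    · intro k
      have := hg.anti (Nat.zero_le k)
      split_ifs <;> omega
    · intro k hk
      rw [if_neg (by omega)]
  · exact ⟨fun {p q} hpq => hg.anti (by omega), fun k => hg.bdd _,
      fun k hk => hg.van _ (by omega)⟩

/-- The rotation invariant. -/
def PhiF (a b : ℕ) (c : ℕ → ℕ) : Finset (ZMod (a + b)) :=
  (Finset.range b).image (fun t => ((c t + (b - 1 - t) : ℕ) : ZMod (a + b)))

theorem PhiF_rot (ha : 0 < a) (hb : 0 < b) {c : ℕ → ℕ} (hg : Good a b c) :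
    PhiF a b (PiH a b c) = (PhiF a b c).image (· + 1) := by
  unfold PhiF
  rw [Finset.image_image]
  unfold PiH
  split_ifs with hc
  · refine Finset.image_congr ?_
    intro t ht
    rw [Finset.coe_range, Set.mem_Iio] at ht
    show (((if t < b then c t + 1 else 0) + (b - 1 - t) : ℕ) : ZMod (a + b))
      = ((c t + (b - 1 - t) : ℕ) : ZMod (a + b)) + 1
    rw [if_pos ht, show c t + 1 + (b - 1 - t) = (c t + (b - 1 - t)) + 1 by omega,
      Nat.cast_add, Nat.cast_one]
  · have hc0 : c 0 = a := by have := hg.bdd 0; omega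
    ext u
    simp only [Finset.mem_image, Finset.mem_range, Function.comp_apply]
    constructor
    · rintro ⟨t, ht, rfl⟩
      by_cases ht1 : t = b - 1
      · refine ⟨0, by omega, ?_⟩
        subst ht1
        rw [hg.van (b - 1 + 1) (by omega), hc0]
        show ((a + (b - 1 - 0) : ℕ) : ZMod (a + b)) + 1 = ((0 + (b - 1 - (b - 1)) : ℕ) : ZMod (a + b))
        rw [show (0 + (b - 1 - (b - 1))) = 0 by omega, Nat.cast_zero,
          show ((a + (b - 1 - 0) : ℕ) : ZMod (a + b)) + 1 = ((a + (b - 1 - 0) + 1 : ℕ) : ZMod (a + b)) by push_cast; ring,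
          show a + (b - 1 - 0) + 1 = a + b by omega, ZMod.natCast_self]
      · refine ⟨t + 1, by omega, ?_⟩
        show ((c (t + 1) + (b - 1 - (t + 1)) : ℕ) : ZMod (a + b)) + 1
          = ((c (t + 1) + (b - 1 - t) : ℕ) : ZMod (a + b))
        rw [show ((c (t + 1) + (b - 1 - (t + 1)) : ℕ) : ZMod (a + b)) + 1
            = ((c (t + 1) + (b - 1 - (t + 1)) + 1 : ℕ) : ZMod (a + b)) by push_cast; ring,
          show c (t + 1) + (b - 1 - (t + 1)) + 1 = c (t + 1) + (b - 1 - t) by omega]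
    · rintro ⟨t, ht, rfl⟩
      by_cases ht0 : t = 0
      · refine ⟨b - 1, by omega, ?_⟩
        subst ht0
        rw [hg.van (b - 1 + 1) (by omega), hc0]
        show ((0 + (b - 1 - (b - 1)) : ℕ) : ZMod (a + b)) = ((a + (b - 1 - 0) : ℕ) : ZMod (a + b)) + 1
        rw [show (0 + (b - 1 - (b - 1))) = 0 by omega, Nat.cast_zero,
          show ((a + (b - 1 - 0) : ℕ) : ZMod (a + b)) + 1 = ((a + (b - 1 - 0) + 1 : ℕ) : ZMod (a + b)) by push_cast; ring,
          show a + (b - 1 - 0) + 1 = a + b by omega, ZMod.natCast_self]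
      · refine ⟨t - 1, by omega, ?_⟩
        show ((c (t - 1 + 1) + (b - 1 - (t - 1)) : ℕ) : ZMod (a + b))
          = ((c t + (b - 1 - t) : ℕ) : ZMod (a + b)) + 1
        rw [show t - 1 + 1 = t by omega,
          show ((c t + (b - 1 - t) : ℕ) : ZMod (a + b)) + 1
            = ((c t + (b - 1 - t) + 1 : ℕ) : ZMod (a + b)) by push_cast; ring,
          show c t + (b - 1 - t) + 1 = c t + (b - 1 - (t - 1)) by omega]

theorem PhiF_inj (ha : 0 < a) (hb : 0 < b) {c c' : ℕ → ℕ} (hg : Good a b c)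
    (hg' : Good a b c') (h : PhiF a b c = PhiF a b c') : c = c' := by
  -- pass to finsets of naturals
  have hlt : ∀ (c'' : ℕ → ℕ), Good a b c'' → ∀ t, t < b → c'' t + (b - 1 - t) < a + b := by
    intro c'' hg'' t ht
    have := hg''.bdd t
    omega
  have hval : ∀ (c'' : ℕ → ℕ), Good a b c'' →
      Finset.image ZMod.val (PhiF a b c'')
        = (Finset.range b).image (fun t => c'' t + (b - 1 - t)) := by
    intro c'' hg''
    unfold PhiF
    rw [Finset.image_image]
    refine Finset.image_congr ?_
    intro t ht
    rw [Finset.coe_range, Set.mem_Iio] at ht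
    exact ZMod.val_cast_of_lt (hlt c'' hg'' t ht)
  have hSN : (Finset.range b).image (fun t => c t + (b - 1 - t))
      = (Finset.range b).image (fun t => c' t + (b - 1 - t)) := by
    rw [← hval c hg, ← hval c' hg', h]
  -- strictly monotone enumerations
  have hmono : ∀ (c'' : ℕ → ℕ), Good a b c'' →
      StrictMono (fun t : Fin b => c'' (b - 1 - (t : ℕ)) + (t : ℕ)) := by
    intro c'' hg'' t t' htt'
    have h1 : (b - 1 - (t' : ℕ)) ≤ (b - 1 - (t : ℕ)) := by
      have := t'.isLt; omega
    have := hg''.anti h1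
    have htt'' : (t : ℕ) < (t' : ℕ) := htt'
    simp only
    omega
  have himg : ∀ (c'' : ℕ → ℕ), Good a b c'' →
      Finset.image (fun t : Fin b => c'' (b - 1 - (t : ℕ)) + (t : ℕ)) Finset.univ
        = (Finset.range b).image (fun t => c'' t + (b - 1 - t)) := by
    intro c'' hg''
    ext u
    simp only [Finset.mem_image, Finset.mem_univ, true_and, Finset.mem_range]
    constructor
    · rintro ⟨t, rfl⟩
      refine ⟨b - 1 - (t : ℕ), by have := t.isLt; omega, ?_⟩
      congr 1
      have := t.isLt
      omega
    · rintro ⟨t, ht, rfl⟩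
      refine ⟨⟨b - 1 - t, by omega⟩, ?_⟩
      show c'' (b - 1 - (b - 1 - t)) + (b - 1 - t) = c'' t + (b - 1 - t)
      congr 2
      omega
  have hcard : ((Finset.range b).image (fun t => c t + (b - 1 - t))).card = b := by
    rw [← himg c hg]
    rw [Finset.card_image_of_injective _ (hmono c hg).injective, Finset.card_univ,
      Fintype.card_fin]
  have hf : (fun t : Fin b => c (b - 1 - (t : ℕ)) + (t : ℕ))
      = (fun t : Fin b => c' (b - 1 - (t : ℕ)) + (t : ℕ)) := by
    have e1 := Finset.orderEmbOfFin_unique (s := (Finset.range b).image (fun t => c t + (b - 1 - t)))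
      (k := b) hcard (f := fun t : Fin b => c (b - 1 - (t : ℕ)) + (t : ℕ))
      (fun t => by rw [← himg c hg]; exact Finset.mem_image_of_mem _ (Finset.mem_univ t))
      (hmono c hg)
    have e2 := Finset.orderEmbOfFin_unique (s := (Finset.range b).image (fun t => c t + (b - 1 - t)))
      (k := b) hcard (f := fun t : Fin b => c' (b - 1 - (t : ℕ)) + (t : ℕ))
      (fun t => by rw [hSN, ← himg c' hg']; exact Finset.mem_image_of_mem _ (Finset.mem_univ t))
      (hmono c' hg')
    rw [e1, e2]
  funext u
  by_cases hu : u < b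
  · have := congrFun hf ⟨b - 1 - u, by omega⟩
    simp only at this
    rw [show b - 1 - (b - 1 - u) = u by omega] at this
    omega
  · rw [hg.van u (by omega), hg'.van u (by omega)]

theorem PiH_iter (ha : 0 < a) (hb : 0 < b) {c : ℕ → ℕ} (hg : Good a b c) :
    (PiH a b)^[a + b] c = c := by
  have hgood : ∀ N, Good a b ((PiH a b)^[N] c) := by
    intro N
    induction N with
    | zero => exact hg
    | succ N ih => rw [Function.iterate_succ_apply']; exact good_PiH ih
  have hrot : ∀ N, PhiF a b ((PiH a b)^[N] c) = (PhiF a b c).image (· + (N : ZMod (a + b))) := by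
    intro N
    induction N with
    | zero =>
      simp only [Function.iterate_zero, id_eq, Nat.cast_zero]
      ext u
      simp
    | succ N ih =>
      rw [Function.iterate_succ_apply', PhiF_rot ha hb (hgood N), ih, Finset.image_image]
      refine Finset.image_congr ?_
      intro u _
      show u + (N : ZMod (a + b)) + 1 = u + ((N + 1 : ℕ) : ZMod (a + b))
      push_cast
      ring
  have hn : PhiF a b ((PiH a b)^[a + b] c) = PhiF a b c := by
    rw [hrot (a + b), ZMod.natCast_self]
    ext u
    simp
  exact PhiF_inj ha hb (hgood (a + b)) hg hn


/-- Element of the ideal subtype from a height profile. -/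
def mkI (c : ℕ → ℕ) (hg : Good a b c) : IdealT (PP a b) :=
  ⟨ofHtsN c, ofHtsN_ideal (fun {i j} h => hg.anti h)⟩

theorem pi_apply_mkI (ha : 0 < a) {c : ℕ → ℕ} (hg : Good a b c) :
    permOfL (colsCat (colListN (a := a) (b := b) ha) (List.range b)) (mkI c hg)
      = mkI (PiH a b c) (good_PiH hg) := by
  refine Subtype.ext ?_
  rw [permOfL_apply]
  show togList _ (ofHtsN c) = _
  rw [pi_cols ha hg b (le_refl b), partialH_full hg]
  rfl

theorem good_iterV {c : ℕ → ℕ} (hg : Good a b c) (N : ℕ) : Good a b ((PiH a b)^[N] c) := by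
  induction N with
  | zero => exact hg
  | succ N ih => rw [Function.iterate_succ_apply']; exact good_PiH ih

theorem pi_pow_mkI (ha : 0 < a) :
    ∀ (N : ℕ) (c : ℕ → ℕ) (hg : Good a b c),
      ((permOfL (colsCat (colListN (a := a) (b := b) ha) (List.range b))) ^ N) (mkI c hg)
        = mkI ((PiH a b)^[N] c) (good_iterV hg N) := by
  intro N
  induction N with
  | zero =>
    intro c hg
    rfl
  | succ N ih =>
    intro c hg
    rw [pow_succ']
    have h1 : ((permOfL (colsCat (colListN (a := a) (b := b) ha) (List.range b)))
        * ((permOfL (colsCat (colListN (a := a) (b := b) ha) (List.range b))) ^ N)) (mkI c hg)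
        = (permOfL (colsCat (colListN (a := a) (b := b) ha) (List.range b)))
            (((permOfL (colsCat (colListN (a := a) (b := b) ha) (List.range b))) ^ N) (mkI c hg)) := rfl
    rw [h1, ih c hg, pi_apply_mkI ha]
    exact Subtype.ext (congrArg ofHtsN (Function.iterate_succ_apply' (PiH a b) N c).symm)

theorem pi_pow_one (ha : 0 < a) (hb : 0 < b) :
    (permOfL (colsCat (colListN (a := a) (b := b) ha) (List.range b))) ^ (a + b) = 1 := by
  refine Equiv.ext fun s => ?_
  obtain ⟨I', hI'⟩ := s
  have hg := htsN_good hI'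
  have hs : (⟨I', hI'⟩ : IdealT (PP a b)) = mkI (htsN I') hg :=
    Subtype.ext (ofHtsN_htsN hI').symm
  rw [hs, pi_pow_mkI ha (a + b) (htsN I') hg]
  refine Subtype.ext ?_
  show ofHtsN ((PiH a b)^[a + b] (htsN I')) = ofHtsN (htsN I')
  rw [PiH_iter ha hb hg]

theorem rho_pow_one (ha : 0 < a) (hb : 0 < b) :
    (permOfL (fullRTL (a := a) (b := b) ha)) ^ (a + b) = 1 := by
  obtain ⟨g, hgconj⟩ := isConj_iff.1 (rho_pi_conj (a := a) (b := b) ha)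
  have h1 : permOfL (fullRTL (a := a) (b := b) ha)
      = g⁻¹ * permOfL (colsCat (colListN (a := a) (b := b) ha) (List.range b)) * g := by
    rw [← hgconj]; group
  have h2 : g⁻¹ * permOfL (colsCat (colListN (a := a) (b := b) ha) (List.range b)) * g
      = g⁻¹ * permOfL (colsCat (colListN (a := a) (b := b) ha) (List.range b)) * (g⁻¹)⁻¹ := by
    rw [inv_inv]
  rw [h1, h2, conj_pow, pi_pow_one ha hb]
  group

end CFDF


/-- The Cameron–Fon-der-Flaass theorem: combinatorial rowmotion on the order ideals of
`[a] × [b]` has order dividing `a + b`. -/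

theorem stmt16 (a b : ℕ) (ha : 1 ≤ a) (hb : 1 ≤ b)
    (I : Set (Fin a × Fin b)) (hI : IsOrderIdeal I) :
    combRow^[a + b] I = I := by
  have ha' : 0 < a := ha
  have hb' : 0 < b := hb
  have htrans : ∀ N : ℕ, combRow^[N] I
      = (((CFDF.permOfL (CFDF.fullRTL (a := a) (b := b) ha')) ^ N) ⟨I, hI⟩).1 := by
    intro N
    induction N with
    | zero => rfl
    | succ N ih =>
      rw [Function.iterate_succ_apply', ih]
      have h2 : ∀ s : CFDF.IdealT (CFDF.PP a b),
          ((CFDF.permOfL (CFDF.fullRTL (a := a) (b := b) ha')) s).1 = combRow s.1 := by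
        intro s
        rw [CFDF.permOfL_apply]
        exact CFDF.rho_correct ha' s.2
      rw [← h2]
      congr 1
      rw [pow_succ']
      rfl
  rw [htrans (a + b), CFDF.rho_pow_one ha' hb']
  rfl



end
end
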